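/- arXiv:1708.09100 — 9 statements merged into one kernel-verified Lean document; each statement's English description precedes it below -/
import Mathlib

section
/- Let k ≥ 2 be an integer with distinct prime factors p_1, ..., p_m. Then for every positive integer n, 𝔰((Z/kZ)^n) < 3k·(r(F_{p_1}^{n}) + ... + r(F_{p_m}^{n})). -/
/-- A finite set in an abelian group is free of three-term arithmetic progressions:
it contains no three distinct elements x, y, z with x + z = 2y.
(Note that x ≠ z and x + z = y + y automatically force x, y, z to be pairwise distinct.) -/
def APFree {G : Type*} [AddCommGroup G] (A : Finset G) : Prop :=
  ∀ x ∈ A, ∀ y ∈ A, ∀ z ∈ A, x ≠ z → x + z ≠ y + y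

/-- r(G): the largest size of a subset of G without a three-term arithmetic progression. -/
noncomputable def rAP (G : Type*) [AddCommGroup G] : ℕ :=
  sSup {k | ∃ A : Finset G, APFree A ∧ A.card = k}

/-- The Erdős–Ginzburg–Ziv constant 𝔰(G): the smallest positive integer s such that every
sequence (multiset) of s elements of G has a subsequence of length exp(G) summing to zero. -/
noncomputable def EGZ (G : Type*) [AddCommGroup G] : ℕ :=
  sInf {s | 0 < s ∧ ∀ m : Multiset G, Multiset.card m = s →
    ∃ t ≤ m, Multiset.card t = AddMonoid.exponent G ∧ t.sum = 0}

/-- 𝔤(G): the smallest integer a such that every subset of G of size at least a contains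
exp(G) distinct elements summing to zero. -/
noncomputable def gEGZ (G : Type*) [AddCommGroup G] : ℕ :=
  sInf {a | ∀ A : Finset G, a ≤ A.card →
    ∃ B ⊆ A, B.card = AddMonoid.exponent G ∧ ∑ x ∈ B, x = 0}


open Multiset Finset

namespace EGZaux

section Helpers
/-- extract a submultiset of any smaller size -/
lemma exists_le_card {α : Type*} (S : Multiset α) (n : ℕ) (h : n ≤ Multiset.card S) :
    ∃ T ≤ S, Multiset.card T = n := by
  refine ⟨(S.toList.take n : List α), ?_, ?_⟩
  · calc ((S.toList.take n : List α) : Multiset α) ≤ (S.toList : Multiset α) := by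
          exact (S.toList.take_sublist n).subperm
    _ = S := by simp
  · simp only [Multiset.coe_card, List.length_take]
    have : S.toList.length = Multiset.card S := by simp
    omega

/-- pull back a submultiset of a map -/
lemma exists_of_le_map {α β : Type*} [DecidableEq α] [DecidableEq β] {f : α → β} {S : Multiset α}
    {T' : Multiset β} (h : T' ≤ S.map f) : ∃ T ≤ S, T.map f = T' := by
  induction T' using Multiset.induction generalizing S with
  | empty => exact ⟨0, Multiset.zero_le _, rfl⟩
  | cons a T'' IH =>
    have ha : a ∈ S.map f := mem_of_le h (mem_cons_self _ _)
    obtain ⟨s₀, hs₀, rfl⟩ := Multiset.mem_map.mp ha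
    have hS : S.map f = f s₀ ::ₘ (S.erase s₀).map f := by
      rw [← Multiset.map_cons, Multiset.cons_erase hs₀]
    have h2 : T'' ≤ (S.erase s₀).map f := by
      rw [hS] at h
      exact (Multiset.cons_le_cons_iff _).mp h
    obtain ⟨T, hT, hTm⟩ := IH h2
    exact ⟨s₀ ::ₘ T, (Multiset.cons_le_cons_iff _).mpr hT |>.trans
      (le_of_eq (Multiset.cons_erase hs₀)), by simp [hTm]⟩

lemma sum_mono {α : Type*} {S T : Multiset (Multiset α)} (h : S ≤ T) : S.sum ≤ T.sum := by
  obtain ⟨u, rfl⟩ := Multiset.le_iff_exists_add.mp h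
  simp only [Multiset.sum_add]
  exact le_add_right _ _

lemma card_sum_uniform {α : Type*} (S : Multiset (Multiset α)) (s : ℕ)
    (h : ∀ m ∈ S, Multiset.card m = s) : Multiset.card S.sum = s * Multiset.card S := by
  induction S using Multiset.induction with
  | empty => simp
  | cons a S IH =>
    simp only [Multiset.sum_cons, Multiset.card_add, Multiset.card_cons]
    rw [h a (mem_cons_self _ _), IH (fun m hm => h m (mem_cons_of_mem hm))]
    ring

lemma sum_sum {α : Type*} [AddCommMonoid α] (S : Multiset (Multiset α)) :
    S.sum.sum = (S.map Multiset.sum).sum := by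
  induction S using Multiset.induction with
  | empty => simp
  | cons a S IH => simp [IH]

lemma sum_apply {ι R : Type*} [AddCommMonoid R] (S : Multiset (ι → R)) (i : ι) :
    S.sum i = (S.map (fun v => v i)).sum := by
  induction S using Multiset.induction with
  | empty =>
    show (0 : ι → R) i = _
    simp
  | cons a S IH =>
    rw [Multiset.sum_cons, Multiset.map_cons, Multiset.sum_cons, ← IH]
    rfl

lemma natCast_sum {α R : Type*} [AddCommMonoidWithOne R] (S : Multiset α) (g : α → ℕ) :
    (S.map (fun a => ((g a : ℕ) : R))).sum = (((S.map g).sum : ℕ) : R) := by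
  induction S using Multiset.induction with
  | empty =>
    rw [Multiset.map_zero, Multiset.map_zero, Multiset.sum_zero, Multiset.sum_zero, Nat.cast_zero]
  | cons a S IH =>
    rw [Multiset.map_cons, Multiset.map_cons, Multiset.sum_cons, Multiset.sum_cons, IH,
      Nat.cast_add]


end Helpers

section Gadgets

variable {G : Type*} [AddCommGroup G]

def Wg (s : ℕ) (c : G) (M : Multiset G) : Prop :=
  Multiset.card M = s ∧ ∀ σ ≤ s, ∃ T ≤ M, Multiset.card T = σ ∧ T.sum = σ • c

/-- gadget-free multiset -/
def GF (s : ℕ) (M : Multiset G) : Prop := ∀ c : G, ∀ T ≤ M, ¬ Wg s c T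

lemma Wg_single (x : G) : Wg 1 x {x} := by
  constructor
  · simp
  · intro σ hσ
    interval_cases σ
    · exact ⟨0, Multiset.zero_le _, by simp, by simp⟩
    · exact ⟨{x}, le_rfl, by simp, by simp⟩

lemma Wg_mergeAP {x y z : G} (hxz : x + z = y + y) {s : ℕ} {M₁ M₂ M₃ : Multiset G}
    (h1 : Wg s x M₁) (h2 : Wg s y M₂) (h3 : Wg s z M₃) :
    Wg (3 * s) y (M₁ + M₂ + M₃) := by
  obtain ⟨hc1, hw1⟩ := h1
  obtain ⟨hc2, hw2⟩ := h2
  obtain ⟨hc3, hw3⟩ := h3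
  constructor
  · simp only [Multiset.card_add]; omega
  · intro σ hσ
    by_cases hss : σ ≤ s
    · obtain ⟨T, hT, hTc, hTs⟩ := hw2 σ hss
      exact ⟨T, hT.trans (by
        calc M₂ ≤ M₁ + M₂ := le_add_left _ _
        _ ≤ M₁ + M₂ + M₃ := le_add_right _ _), hTc, hTs⟩
    · push_neg at hss
      have hs1 : 1 ≤ s := by omega
      set a := (σ - s + 1) / 2 with ha
      set b := σ - 2 * a with hb
      have haa : a ≤ s := by omega
      have hbb : b ≤ s := by omega
      have habσ : 2 * a + b = σ := by omega
      obtain ⟨T₁, hT1, hT1c, hT1s⟩ := hw1 a haa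
      obtain ⟨T₂, hT2, hT2c, hT2s⟩ := hw2 b hbb
      obtain ⟨T₃, hT3, hT3c, hT3s⟩ := hw3 a haa
      refine ⟨T₁ + T₂ + T₃, add_le_add (add_le_add hT1 hT2) hT3, by
        simp only [Multiset.card_add]; omega, ?_⟩
      rw [Multiset.sum_add, Multiset.sum_add, hT1s, hT2s, hT3s]
      have : a • x + b • y + a • z = (a + a + b) • y := by
        rw [add_nsmul, add_nsmul]
        have : a • x + a • z = a • y + a • y := by
          rw [← smul_add, ← smul_add, hxz]
        calc a • x + b • y + a • z = (a • x + a • z) + b • y := by abel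
        _ = (a • y + a • y) + b • y := by rw [this]
        _ = a • y + a • y + b • y := by abel
      rw [this]
      congr 1
      omega

lemma Wg_mergeC {c : G} {s : ℕ} {M₁ M₂ M₃ : Multiset G}
    (h1 : Wg s c M₁) (h2 : Wg s c M₂) (h3 : Wg s c M₃) :
    Wg (3 * s) c (M₁ + M₂ + M₃) := by
  obtain ⟨hc1, hw1⟩ := h1
  obtain ⟨hc2, hw2⟩ := h2
  obtain ⟨hc3, hw3⟩ := h3
  constructor
  · simp only [Multiset.card_add]; omega
  · intro σ hσ
    set σ₁ := min σ s with h1'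
    set σ₂ := min (σ - σ₁) s with h2'
    set σ₃ := σ - σ₁ - σ₂ with h3'
    have e1 : σ₁ ≤ s := min_le_right _ _
    have e2 : σ₂ ≤ s := min_le_right _ _
    have e3 : σ₃ ≤ s := by omega
    have esum : σ₁ + σ₂ + σ₃ = σ := by omega
    obtain ⟨T₁, hT1, hT1c, hT1s⟩ := hw1 σ₁ e1
    obtain ⟨T₂, hT2, hT2c, hT2s⟩ := hw2 σ₂ e2
    obtain ⟨T₃, hT3, hT3c, hT3s⟩ := hw3 σ₃ e3
    refine ⟨T₁ + T₂ + T₃, add_le_add (add_le_add hT1 hT2) hT3, by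
      simp only [Multiset.card_add]; omega, ?_⟩
    rw [Multiset.sum_add, Multiset.sum_add, hT1s, hT2s, hT3s, ← add_nsmul, ← add_nsmul, esum]

lemma GF_one {M : Multiset G} (h : GF 1 M) : M = 0 := by
  by_contra hM
  obtain ⟨x, hx⟩ := Multiset.exists_mem_of_ne_zero hM
  exact h x {x} (Multiset.singleton_le.mpr hx) (Wg_single x)

/-- greedy extraction of a maximal family of capacity-`s` gadgets -/
lemma exists_family [DecidableEq G] (s : ℕ) (hs : 1 ≤ s) (M : Multiset G) :
    ∃ (FM : Multiset (Multiset G × G)) (R : Multiset G),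
      (∀ e ∈ FM, Wg s e.2 e.1) ∧ (FM.map Prod.fst).sum + R = M ∧ GF s R := by
  suffices H : ∀ N (M : Multiset G), Multiset.card M ≤ N →
      ∃ (FM : Multiset (Multiset G × G)) (R : Multiset G),
      (∀ e ∈ FM, Wg s e.2 e.1) ∧ (FM.map Prod.fst).sum + R = M ∧ GF s R from
    H (Multiset.card M) M le_rfl
  intro N
  induction N with
  | zero =>
    intro M hM
    refine ⟨0, M, by simp, by simp, ?_⟩
    intro c T hT hW
    have h0 : Multiset.card T = 0 := by
      have := Multiset.card_le_card hT
      omega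
    have := hW.1
    omega
  | succ N IH =>
    intro M hM
    by_cases h : GF s M
    · exact ⟨0, M, by simp, by simp, h⟩
    · unfold GF at h
      push_neg at h
      obtain ⟨c, T, hTM, hW⟩ := h
      have hTc : Multiset.card T = s := hW.1
      have hcard : Multiset.card (M - T) ≤ N := by
        rw [Multiset.card_sub hTM]
        omega
      obtain ⟨FM', R, hp1, hp2, hp3⟩ := IH (M - T) hcard
      refine ⟨(T, c) ::ₘ FM', R, ?_, ?_, hp3⟩
      · intro e he
        rcases Multiset.mem_cons.mp he with rfl | he'
        · exact hW
        · exact hp1 e he'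
      · rw [Multiset.map_cons, Multiset.sum_cons, add_assoc, hp2]
        exact add_tsub_cancel_of_le hTM


section Counting

variable [Fintype G] [DecidableEq G]

lemma apfree_card_le {A : Finset G} (h : APFree A) : A.card ≤ rAP G := by
  apply le_csSup
  · refine ⟨Fintype.card G, ?_⟩
    rintro k ⟨B, -, rfl⟩
    exact Finset.card_le_univ B
  · exact ⟨A, h, rfl⟩

lemma rAP_pos : 1 ≤ rAP G := by
  have : (({0} : Finset G)).card ≤ rAP G := by
    apply apfree_card_le
    intro x hx y hy z hz hxz
    simp only [Finset.mem_singleton] at hx hz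
    exact absurd (hx.trans hz.symm) hxz
  simpa using this

lemma not_apfree {A : Finset G} (h : rAP G < A.card) :
    ∃ x ∈ A, ∃ y ∈ A, ∃ z ∈ A, x ≠ z ∧ x + z = y + y := by
  by_contra hc
  push_neg at hc
  have : APFree A := fun x hx y hy z hz hxz => hc x hx y hy z hz hxz
  exact absurd (apfree_card_le this) (by omega)

/-- three distinct elements of a multiset form a submultiset -/
lemma triple_le {α : Type*} [DecidableEq α] {S : Multiset α} {a b c : α}
    (ha : a ∈ S) (hb : b ∈ S) (hc : c ∈ S) (hab : a ≠ b) (hac : a ≠ c) (hbc : b ≠ c) :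
    ({a, b, c} : Multiset α) ≤ S := by
  have hb' : b ∈ S.erase a := (Multiset.mem_erase_of_ne (Ne.symm hab)).mpr hb
  have hc' : c ∈ (S.erase a).erase b := by
    refine (Multiset.mem_erase_of_ne (Ne.symm hbc)).mpr ?_
    exact (Multiset.mem_erase_of_ne (Ne.symm hac)).mpr hc
  have step1 : ({c} : Multiset α) ≤ (S.erase a).erase b := Multiset.singleton_le.mpr hc'
  have step2 : (b ::ₘ {c} : Multiset α) ≤ S.erase a := by
    calc (b ::ₘ {c} : Multiset α) ≤ b ::ₘ (S.erase a).erase b :=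
          (Multiset.cons_le_cons_iff _).mpr step1
    _ = S.erase a := Multiset.cons_erase hb'
  calc ({a, b, c} : Multiset α) = a ::ₘ b ::ₘ {c} := rfl
  _ ≤ a ::ₘ S.erase a := (Multiset.cons_le_cons_iff _).mpr step2
  _ = S := Multiset.cons_erase ha

lemma card_family_le {s : ℕ} {M : Multiset G} (hGF : GF (3 * s) M)
    (FM : Multiset (Multiset G × G))
    (hW : ∀ e ∈ FM, Wg s e.2 e.1) (hle : (FM.map Prod.fst).sum ≤ M) :
    Multiset.card FM ≤ 2 * rAP G := by
  by_contra hbig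
  push_neg at hbig
  set CM := FM.map Prod.snd with hCM
  have hCMcard : Multiset.card CM = Multiset.card FM := Multiset.card_map _ _
  by_cases hcount : ∃ c : G, 3 ≤ CM.count c
  · obtain ⟨c, hc⟩ := hcount
    have hfc : Multiset.card (FM.filter (fun e => c = e.2)) = CM.count c := by
      rw [hCM, Multiset.count_map]
    obtain ⟨T3, hT3le, hT3card⟩ := exists_le_card (FM.filter (fun e => c = e.2)) 3 (by omega)
    obtain ⟨e₁, e₂, e₃, rfl⟩ := Multiset.card_eq_three.mp hT3card
    have hmem : ∀ e ∈ ({e₁, e₂, e₃} : Multiset (Multiset G × G)),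
        e ∈ FM ∧ c = e.2 := by
      intro e he
      have := Multiset.mem_of_le hT3le he
      exact Multiset.mem_filter.mp this |>.imp id id
    have h1 := hmem e₁ (by simp)
    have h2 := hmem e₂ (by simp)
    have h3 := hmem e₃ (by simp)
    have hg : Wg (3 * s) c (e₁.1 + e₂.1 + e₃.1) := by
      refine Wg_mergeC ?_ ?_ ?_
      · have := hW e₁ h1.1; rwa [← h1.2] at this
      · have := hW e₂ h2.1; rwa [← h2.2] at this
      · have := hW e₃ h3.1; rwa [← h3.2] at this
    apply hGF c (e₁.1 + e₂.1 + e₃.1) ?_ hg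
    calc e₁.1 + e₂.1 + e₃.1
        = (({e₁, e₂, e₃} : Multiset (Multiset G × G)).map Prod.fst).sum := by
          simp [Multiset.sum_cons, add_assoc]
    _ ≤ (FM.map Prod.fst).sum :=
        sum_mono (Multiset.map_le_map (hT3le.trans (Multiset.filter_le _ _)))
    _ ≤ M := hle
  · push_neg at hcount
    have hdistinct : rAP G < CM.toFinset.card := by
      have h2 : Multiset.card CM ≤ 2 * CM.toFinset.card := by
        calc Multiset.card CM = ∑ a ∈ CM.toFinset, CM.count a :=
              (Multiset.toFinset_sum_count_eq CM).symm
        _ ≤ ∑ _a ∈ CM.toFinset, 2 := Finset.sum_le_sum (fun a _ => by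
              have := hcount a; omega)
        _ = 2 * CM.toFinset.card := by rw [Finset.sum_const]; ring
      omega
    obtain ⟨x, hx, y, hy, z, hz, hxz, hsum⟩ := not_apfree hdistinct
    have hxy : x ≠ y := by
      rintro rfl
      exact hxz (add_left_cancel hsum).symm
    have hyz : y ≠ z := by
      rintro rfl
      exact hxz (add_right_cancel hsum)
    obtain ⟨ex, hexm, hex⟩ := Multiset.mem_map.mp (Multiset.mem_toFinset.mp hx)
    obtain ⟨ey, heym, hey⟩ := Multiset.mem_map.mp (Multiset.mem_toFinset.mp hy)
    obtain ⟨ez, hezm, hez⟩ := Multiset.mem_map.mp (Multiset.mem_toFinset.mp hz)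
    have hab : ex ≠ ey := fun h => hxy (by rw [← hex, ← hey, h])
    have hac : ex ≠ ez := fun h => hxz (by rw [← hex, ← hez, h])
    have hbc : ey ≠ ez := fun h => hyz (by rw [← hey, ← hez, h])
    have htriple := triple_le hexm heym hezm hab hac hbc
    have hg : Wg (3 * s) y (ex.1 + ey.1 + ez.1) := by
      refine Wg_mergeAP hsum ?_ ?_ ?_
      · have := hW ex hexm; rwa [hex] at this
      · have := hW ey heym; rwa [hey] at this
      · have := hW ez hezm; rwa [hez] at this
    apply hGF y (ex.1 + ey.1 + ez.1) ?_ hg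
    calc ex.1 + ey.1 + ez.1
        = (({ex, ey, ez} : Multiset (Multiset G × G)).map Prod.fst).sum := by
          simp [Multiset.sum_cons, add_assoc]
    _ ≤ (FM.map Prod.fst).sum := sum_mono (Multiset.map_le_map htriple)
    _ ≤ M := hle


/-- main counting lemma: a gadget-free multiset is small -/
lemma gf_card (j : ℕ) (M : Multiset G) (h : GF (3 ^ j) M) :
    Multiset.card M + rAP G ≤ rAP G * 3 ^ j := by
  induction j generalizing M with
  | zero =>
    have := GF_one (by simpa using h)
    subst this
    simp
  | succ j IH =>
    obtain ⟨FM, R, h1, h2, h3⟩ := exists_family (3 ^ j) (Nat.one_le_pow _ _ (by norm_num)) M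
    have hGF3 : GF (3 * 3 ^ j) M := by
      rwa [show (3 : ℕ) * 3 ^ j = 3 ^ (j + 1) by ring]
    have hfam : Multiset.card FM ≤ 2 * rAP G := by
      refine card_family_le hGF3 FM h1 ?_
      rw [← h2]; exact le_add_right _ _
    have hcards : Multiset.card ((FM.map Prod.fst).sum) = 3 ^ j * Multiset.card FM := by
      rw [show Multiset.card FM = Multiset.card (FM.map Prod.fst) from (Multiset.card_map _ _).symm]
      apply card_sum_uniform
      intro m hm
      obtain ⟨e, he, rfl⟩ := Multiset.mem_map.mp hm
      exact (h1 e he).1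
    have hR := IH R h3
    have hM : Multiset.card M = 3 ^ j * Multiset.card FM + Multiset.card R := by
      rw [← h2, Multiset.card_add, hcards]
    have h3j : (0:ℕ) < 3 ^ j := Nat.pow_pos (by norm_num)
    have key : 3 ^ j * Multiset.card FM ≤ 3 ^ j * (2 * rAP G) :=
      Nat.mul_le_mul_left _ hfam
    have : rAP G * 3 ^ (j+1) = 3 ^ j * (2 * rAP G) + rAP G * 3 ^ j := by ring
    omega

/-- zero-sum-of-length-q extraction in an abstract group -/
lemma abstract_zero_sum (q : ℕ) (M : Multiset G)
    (hcard : rAP G * 3 ^ (Nat.clog 3 q) < Multiset.card M + rAP G) :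
    ∃ T ≤ M, ∃ c : G, Multiset.card T = q ∧ T.sum = q • c := by
  by_contra hno
  push_neg at hno
  have hGF : GF (3 ^ (Nat.clog 3 q)) M := by
    intro c W hWM hW
    obtain ⟨hWc, hWw⟩ := hW
    have hq : q ≤ 3 ^ (Nat.clog 3 q) := Nat.le_pow_clog (by norm_num) q
    obtain ⟨T, hT, hTc, hTs⟩ := hWw q hq
    exact hno T (hT.trans hWM) c hTc hTs
  exact absurd (gf_card _ M hGF) (by omega)

end Counting

end Gadgets

/-- every multiset of size s over (Z/k)^n has a zero-sum submultiset of size k -/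
def Zs (n k s : ℕ) : Prop :=
  ∀ m : Multiset (Fin n → ZMod k), Multiset.card m = s →
    ∃ t ≤ m, Multiset.card t = k ∧ t.sum = 0

lemma Zs_mono {n k s s' : ℕ} (h : Zs n k s) (hss : s ≤ s') : Zs n k s' := by
  intro m hm
  obtain ⟨M₀, hM₀, hM₀c⟩ := exists_le_card m s (by omega)
  obtain ⟨t, ht, htc, hts⟩ := h M₀ hM₀c
  exact ⟨t, ht.trans hM₀, htc, hts⟩

lemma Zs_prime (n q : ℕ) (hq : 1 ≤ q) :
    Zs n q (rAP (Fin n → ZMod q) * (3 ^ (Nat.clog 3 q) - 1) + 1) := by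
  haveI : NeZero q := ⟨by omega⟩
  intro m hm
  set r := rAP (Fin n → ZMod q) with hr
  have h3 : 1 ≤ 3 ^ (Nat.clog 3 q) := Nat.one_le_pow _ _ (by norm_num)
  have hmul : r * 3 ^ (Nat.clog 3 q) = r * (3 ^ (Nat.clog 3 q) - 1) + r := by
    cases' Nat.exists_eq_add_of_le h3 with d hd
    rw [hd]
    simp [Nat.add_sub_cancel_left, Nat.mul_add, Nat.add_comm]
  obtain ⟨T, hT, c, hTc, hTs⟩ := abstract_zero_sum q m (by rw [hmul, ← hr]; omega)
  refine ⟨T, hT, hTc, ?_⟩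
  rw [hTs]
  funext i
  show q • c i = 0
  rw [nsmul_eq_mul, ZMod.natCast_self, zero_mul]


lemma Zs_comp {n p K bp bK : ℕ} (hp : 1 ≤ p) (hK : 1 ≤ K) (hbK1 : 1 ≤ bK)
    (hbp : Zs n p bp) (hbK : Zs n K bK) :
    Zs n (p * K) (p * (bK - 1) + bp) := by
  haveI : NeZero p := ⟨by omega⟩
  haveI : NeZero K := ⟨by omega⟩
  haveI : NeZero (p * K) := ⟨by positivity⟩
  intro m hm
  let fc : (Fin n → ZMod (p * K)) →+ (Fin n → ZMod p) :=
    AddMonoidHom.compLeft (ZMod.castHom (dvd_mul_right p K) (ZMod p)).toAddMonoidHom (Fin n)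
  have hfc : ∀ (v : Fin n → ZMod (p * K)) (i : Fin n),
      fc v i = ZMod.castHom (dvd_mul_right p K) (ZMod p) (v i) := fun v i => rfl
  -- step 1: extract bK disjoint blocks of size p, each with zero sum mod p
  have BLOCKS : ∀ i, i ≤ bK → ∃ BL : Multiset (Multiset (Fin n → ZMod (p * K))),
      Multiset.card BL = i ∧ BL.sum ≤ m ∧
      ∀ b ∈ BL, Multiset.card b = p ∧ fc b.sum = 0 := by
    intro i
    induction i with
    | zero => exact fun _ => ⟨0, by simp, Multiset.zero_le _, by simp⟩
    | succ i IH =>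
      intro hi
      obtain ⟨BL, hBLc, hBLs, hBLp⟩ := IH (by omega)
      have hBLsum : Multiset.card BL.sum = p * i := by
        rw [card_sum_uniform BL p (fun b hb => (hBLp b hb).1), hBLc]
      have hrest : bp ≤ Multiset.card (m - BL.sum) := by
        rw [Multiset.card_sub hBLs, hm]
        have : p * i ≤ p * (bK - 1) := Nat.mul_le_mul_left _ (by omega)
        omega
      have hZ : Zs n p (Multiset.card ((m - BL.sum).map fc)) := by
        apply Zs_mono hbp
        rwa [Multiset.card_map]
      obtain ⟨t', ht'le, ht'c, ht's⟩ := hZ ((m - BL.sum).map fc) rfl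
      obtain ⟨T, hTle, hTmap⟩ := exists_of_le_map ht'le
      have hTc : Multiset.card T = p := by
        have := Multiset.card_map fc T
        rw [hTmap] at this
        omega
      have hTs : fc T.sum = 0 := by
        rw [map_multiset_sum, hTmap, ht's]
      refine ⟨T ::ₘ BL, by simp [hBLc], ?_, ?_⟩
      · rw [Multiset.sum_cons]
        have := (le_tsub_iff_left hBLs).mp hTle
        rwa [add_comm] at this
      · intro b hb
        rcases Multiset.mem_cons.mp hb with rfl | hb'
        · exact ⟨hTc, hTs⟩
        · exact hBLp b hb'
  obtain ⟨BL, hBLc, hBLs, hBLp⟩ := BLOCKS bK le_rfl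
  -- step 2: select K blocks whose "quotients" sum to zero mod K
  let cf : Multiset (Fin n → ZMod (p * K)) → (Fin n → ZMod K) :=
    fun b i => (((b.sum i).val / p : ℕ) : ZMod K)
  obtain ⟨TC, hTCle, hTCc, hTCs⟩ := hbK (BL.map cf) (by rw [Multiset.card_map, hBLc])
  obtain ⟨BS, hBSle, hBSmap⟩ := exists_of_le_map hTCle
  have hBScard : Multiset.card BS = K := by
    have := Multiset.card_map cf BS
    rw [hBSmap] at this
    omega
  refine ⟨BS.sum, (sum_mono hBSle).trans hBLs, ?_, ?_⟩
  · rw [card_sum_uniform BS p (fun b hb => (hBLp b (Multiset.mem_of_le hBSle hb)).1), hBScard]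
  · -- the selected p*K elements sum to zero
    funext i
    simp only [Pi.zero_apply]
    have hdvd : ∀ b ∈ BS, p ∣ (b.sum i).val := by
      intro b hb
      have h0 : fc b.sum = 0 := (hBLp b (Multiset.mem_of_le hBSle hb)).2
      have h0i : ZMod.castHom (dvd_mul_right p K) (ZMod p) (b.sum i) = 0 := by
        rw [← hfc]
        exact congrFun h0 i
      have : (((b.sum i).val : ℕ) : ZMod p) = 0 := by
        rw [ZMod.natCast_val, ← ZMod.castHom_apply (h := dvd_mul_right p K)]
        exact h0i
      exact (ZMod.natCast_eq_zero_iff _ _).mp this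
    have e1 : (BS.sum).sum i = (BS.map (fun b => b.sum i)).sum := by
      rw [sum_sum, sum_apply, Multiset.map_map]
      rfl
    have e2 : (BS.map (fun b => b.sum i)) =
        BS.map (fun b => ((p * ((b.sum i).val / p) : ℕ) : ZMod (p * K))) := by
      apply Multiset.map_congr rfl
      intro b hb
      rw [Nat.mul_div_cancel' (hdvd b hb)]
      rw [ZMod.natCast_val, ZMod.cast_id]
    have e3 : (BS.map (fun b => ((p * ((b.sum i).val / p) : ℕ) : ZMod (p * K)))).sum
        = (((BS.map (fun b => p * ((b.sum i).val / p))).sum : ℕ) : ZMod (p * K)) :=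
      natCast_sum BS _
    have e4 : (BS.map (fun b => p * ((b.sum i).val / p))).sum
        = p * (BS.map (fun b => (b.sum i).val / p)).sum := by
      rw [← Multiset.sum_map_mul_left]
    have hKdvd : K ∣ (BS.map (fun b => (b.sum i).val / p)).sum := by
      have h0 : ((BS.map cf).sum) i = 0 := by rw [hBSmap, hTCs]; rfl
      rw [sum_apply, Multiset.map_map] at h0
      have : (BS.map (fun b => (((b.sum i).val / p : ℕ) : ZMod K))).sum = 0 := h0
      rw [natCast_sum BS _] at this
      exact (ZMod.natCast_eq_zero_iff _ _).mp this
    obtain ⟨e, he⟩ := hKdvd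
    rw [e1, e2, e3, e4, he, ← mul_assoc, Nat.cast_mul, ZMod.natCast_self, zero_mul]


/-- the weight of prime p in the divisor-chain bound -/
def gp (p k : ℕ) : ℕ :=
  (∑ j ∈ Finset.range (k.factorization p), p ^ j) * (k / p ^ (k.factorization p))

/-- the master bound -/
noncomputable def D (n k : ℕ) : ℕ :=
  ∑ p ∈ k.primeFactors, (3 * p - 4) * rAP (Fin n → ZMod p) * gp p k

lemma pow_clog_le {q : ℕ} (hq : 2 ≤ q) : 3 ^ Nat.clog 3 q - 1 ≤ 3 * q - 4 := by
  have h1 : 0 < Nat.clog 3 q := Nat.clog_pos (by norm_num) (by omega)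
  have h2 : 3 ^ (Nat.clog 3 q - 1) < q := Nat.pow_pred_clog_lt_self (by norm_num) (by omega)
  have h3 : 3 ^ Nat.clog 3 q = 3 * 3 ^ (Nat.clog 3 q - 1) := by
    rw [← pow_succ']
    congr 1
    omega
  omega

lemma gp_self {p K : ℕ} (hp : p.Prime) (hK : 1 ≤ K) :
    gp p (p * K) = K / p ^ (K.factorization p) + p * gp p K := by
  have hp0 : p ≠ 0 := hp.ne_zero
  have hK0 : K ≠ 0 := by omega
  set e := K.factorization p with he
  have f1 : (p * K).factorization p = e + 1 := by
    rw [Nat.factorization_mul hp0 hK0]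
    simp [hp.factorization]
    omega
  have hdivisor : p * K / p ^ (e + 1) = K / p ^ e := by
    rw [pow_succ']
    exact Nat.mul_div_mul_left _ _ hp.pos
  have hsum : ∑ j ∈ Finset.range (e + 1), p ^ j
      = 1 + p * ∑ j ∈ Finset.range e, p ^ j := by
    rw [Finset.sum_range_succ']
    simp [pow_succ', Finset.mul_sum]
    ring
  rw [gp, f1, hdivisor, hsum, gp, ← he]
  ring

lemma gp_other {p K q : ℕ} (hp : p.Prime) (hK : 1 ≤ K) (hq : q.Prime) (hqp : q ≠ p) :
    gp q (p * K) = p * gp q K := by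
  have hp0 : p ≠ 0 := hp.ne_zero
  have hK0 : K ≠ 0 := by omega
  have f2 : (p * K).factorization q = K.factorization q := by
    rw [Nat.factorization_mul hp0 hK0]
    simp [hp.factorization, Finsupp.single_apply, Ne.symm hqp]
  have hdvd : q ^ (K.factorization q) ∣ K := Nat.ordProj_dvd _ _
  rw [gp, gp, f2, Nat.mul_div_assoc p hdvd]
  ring

lemma D_rec (n : ℕ) {p K : ℕ} (hp : p.Prime) (hK : 1 ≤ K) :
    p * D n K + (3 * p - 4) * rAP (Fin n → ZMod p) ≤ D n (p * K) := by
  have hp0 : p ≠ 0 := hp.ne_zero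
  have hK0 : K ≠ 0 := by omega
  have hpf : (p * K).primeFactors = insert p K.primeFactors := by
    rw [Nat.primeFactors_mul hp0 hK0, hp.primeFactors]
    ext q
    simp [or_comm]
  have hother : ∀ q ∈ K.primeFactors.erase p,
      (3 * q - 4) * rAP (Fin n → ZMod q) * gp q (p * K)
        = p * ((3 * q - 4) * rAP (Fin n → ZMod q) * gp q K) := by
    intro q hq
    have hq' := Nat.prime_of_mem_primeFactors (Finset.mem_of_mem_erase hq)
    rw [gp_other hp hK hq' (Finset.ne_of_mem_erase hq)]
    ring
  have hgpself : K / p ^ (K.factorization p) + p * gp p K ≤ gp p (p * K) := by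
    rw [gp_self hp hK]
  have hKdiv : 1 ≤ K / p ^ (K.factorization p) :=
    Nat.div_pos (Nat.le_of_dvd (by omega) (Nat.ordProj_dvd _ _)) (Nat.pow_pos hp.pos)
  by_cases hmem : p ∈ K.primeFactors
  · have hDsplit : D n (p * K)
        = (3 * p - 4) * rAP (Fin n → ZMod p) * gp p (p * K)
          + ∑ q ∈ K.primeFactors.erase p,
              (3 * q - 4) * rAP (Fin n → ZMod q) * gp q (p * K) := by
      rw [D, hpf, Finset.insert_eq_self.mpr hmem, ← Finset.add_sum_erase _ _ hmem]
    have hDKsplit : D n K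
        = (3 * p - 4) * rAP (Fin n → ZMod p) * gp p K
          + ∑ q ∈ K.primeFactors.erase p,
              (3 * q - 4) * rAP (Fin n → ZMod q) * gp q K := by
      rw [D, ← Finset.add_sum_erase _ _ hmem]
    rw [hDsplit, Finset.sum_congr rfl hother, ← Finset.mul_sum, hDKsplit]
    have : (3 * p - 4) * rAP (Fin n → ZMod p) * gp p (p * K)
        ≥ (3 * p - 4) * rAP (Fin n → ZMod p) * (1 + p * gp p K) := by
      apply Nat.mul_le_mul_left
      omega
    nlinarith [this]
  · have he0 : K.factorization p = 0 := by
      rw [Nat.factorization_eq_zero_iff]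
      right; left
      intro hdvd
      exact hmem (Nat.mem_primeFactors.mpr ⟨hp, hdvd, hK0⟩)
    have hgp0 : gp p K = 0 := by
      rw [gp, he0]
      simp
    have hDsplit : D n (p * K)
        = (3 * p - 4) * rAP (Fin n → ZMod p) * gp p (p * K)
          + ∑ q ∈ K.primeFactors,
              (3 * q - 4) * rAP (Fin n → ZMod q) * gp q (p * K) := by
      rw [D, hpf, Finset.sum_insert hmem]
    have herase : K.primeFactors.erase p = K.primeFactors := Finset.erase_eq_of_notMem hmem
    have hother' : ∀ q ∈ K.primeFactors,
        (3 * q - 4) * rAP (Fin n → ZMod q) * gp q (p * K)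
          = p * ((3 * q - 4) * rAP (Fin n → ZMod q) * gp q K) := by
      intro q hq
      exact hother q (by rw [herase]; exact hq)
    rw [hDsplit, Finset.sum_congr rfl hother', ← Finset.mul_sum]
    have h1 : (3 * p - 4) * rAP (Fin n → ZMod p) * (1 + p * gp p K)
        ≤ (3 * p - 4) * rAP (Fin n → ZMod p) * gp p (p * K) := by
      apply Nat.mul_le_mul_left
      omega
    have h2 : (3 * p - 4) * rAP (Fin n → ZMod p)
        ≤ (3 * p - 4) * rAP (Fin n → ZMod p) * gp p (p * K) := by
      calc (3 * p - 4) * rAP (Fin n → ZMod p)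
          = (3 * p - 4) * rAP (Fin n → ZMod p) * (1 + p * gp p K) := by rw [hgp0]; ring
      _ ≤ _ := h1
    have hD : D n K = ∑ q ∈ K.primeFactors, (3 * q - 4) * rAP (Fin n → ZMod q) * gp q K := rfl
    rw [hD]
    omega


lemma geom_bound {p : ℕ} (hp : 2 ≤ p) : ∀ e, 1 ≤ e →
    (3 * p - 4) * (∑ j ∈ Finset.range e, p ^ j) + 2 ≤ 3 * p ^ e := by
  intro e
  induction e with
  | zero => omega
  | succ e IH =>
    intro _
    rcases Nat.eq_zero_or_pos e with rfl | he
    · simp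
      omega
    · have hIH := IH he
      rw [Finset.sum_range_succ, Nat.mul_add, pow_succ]
      have key : (3 * p - 4) * p ^ e + 3 * p ^ e ≤ 3 * (p ^ e * p) := by
        have h1 : ((3 * p - 4) + 3) * p ^ e ≤ (3 * p) * p ^ e :=
          Nat.mul_le_mul_right _ (by omega)
        calc (3 * p - 4) * p ^ e + 3 * p ^ e = ((3 * p - 4) + 3) * p ^ e := by ring
        _ ≤ (3 * p) * p ^ e := h1
        _ = 3 * (p ^ e * p) := by ring
      linarith

lemma gp_bound {n p k : ℕ} (hk : 1 ≤ k) (hpm : p ∈ k.primeFactors) :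
    (3 * p - 4) * gp p k + 2 ≤ 3 * k := by
  have hp := Nat.prime_of_mem_primeFactors hpm
  have hp2 : 2 ≤ p := hp.two_le
  set e := k.factorization p with he
  have he1 : 1 ≤ e := by
    rw [he]
    exact (Nat.Prime.factorization_pos_of_dvd hp (by omega) (Nat.dvd_of_mem_primeFactors hpm))
  set S := ∑ j ∈ Finset.range e, p ^ j with hS
  set c := k / p ^ e with hc
  have hdvd : p ^ e ∣ k := Nat.ordProj_dvd _ _
  have hkeq : p ^ e * c = k := Nat.mul_div_cancel' hdvd
  have hc1 : 1 ≤ c :=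
    Nat.div_pos (Nat.le_of_dvd (by omega) hdvd) (Nat.pow_pos (by omega))
  have hA := geom_bound hp2 e he1
  have h1 : ((3 * p - 4) * S + 2) * c ≤ 3 * p ^ e * c := Nat.mul_le_mul_right c (by rw [hS]; exact hA)
  have hgp : gp p k = S * c := rfl
  calc (3 * p - 4) * gp p k + 2 = (3 * p - 4) * (S * c) + 2 := by rw [hgp]
  _ ≤ (3 * p - 4) * (S * c) + 2 * c := by omega
  _ = ((3 * p - 4) * S + 2) * c := by ring
  _ ≤ 3 * p ^ e * c := h1
  _ = 3 * k := by rw [mul_assoc, hkeq]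

lemma D_bound {n k : ℕ} (hk : 2 ≤ k)
    (hR : 1 ≤ ∑ q ∈ k.primeFactors, rAP (Fin n → ZMod q)) :
    D n k + 2 ≤ 3 * k * ∑ q ∈ k.primeFactors, rAP (Fin n → ZMod q) := by
  have hterm : ∀ p ∈ k.primeFactors,
      (3 * p - 4) * rAP (Fin n → ZMod p) * gp p k
        ≤ (3 * k - 2) * rAP (Fin n → ZMod p) := by
    intro p hpm
    have := gp_bound (n := n) (by omega) hpm
    calc (3 * p - 4) * rAP (Fin n → ZMod p) * gp p k
        = ((3 * p - 4) * gp p k) * rAP (Fin n → ZMod p) := by ring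
    _ ≤ (3 * k - 2) * rAP (Fin n → ZMod p) := Nat.mul_le_mul_right _ (by omega)
  have hD : D n k ≤ (3 * k - 2) * ∑ q ∈ k.primeFactors, rAP (Fin n → ZMod q) := by
    rw [D, Finset.mul_sum]
    exact Finset.sum_le_sum hterm
  have h2 : (3 * k - 2) * ∑ q ∈ k.primeFactors, rAP (Fin n → ZMod q) + 2
      ≤ 3 * k * ∑ q ∈ k.primeFactors, rAP (Fin n → ZMod q) := by
    set R := ∑ q ∈ k.primeFactors, rAP (Fin n → ZMod q) with hRdef
    have : (3 * k - 2) * R + 2 * R ≤ 3 * k * R := by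
      calc (3 * k - 2) * R + 2 * R = ((3 * k - 2) + 2) * R := by ring
      _ ≤ (3 * k) * R := Nat.mul_le_mul_right _ (by omega)
    omega
  omega


lemma main_zs (n : ℕ) : ∀ k, 1 ≤ k → ∃ b, 1 ≤ b ∧ Zs n k b ∧ b ≤ 1 + D n k := by
  intro k
  induction k using Nat.strong_induction_on with
  | _ k IH =>
    intro hk1
    rcases Nat.lt_or_ge k 2 with hk2 | hk2
    · have hk : k = 1 := by omega
      subst hk
      refine ⟨1, le_rfl, ?_, ?_⟩
      · intro m hm
        refine ⟨m, le_rfl, hm, ?_⟩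
        exact Subsingleton.elim _ _
      · simp [D, Nat.primeFactors_one]
    · set p := k.minFac with hpdef
      have hpp : p.Prime := Nat.minFac_prime (by omega)
      have hpdvd : p ∣ k := Nat.minFac_dvd k
      set K := k / p with hKdef
      have hkeq : p * K = k := Nat.mul_div_cancel' hpdvd
      have hK1 : 1 ≤ K := Nat.div_pos (Nat.minFac_le (by omega)) hpp.pos
      have hKlt : K < k := Nat.div_lt_self (by omega) hpp.one_lt
      obtain ⟨bK, hbK1, hbKZ, hbKD⟩ := IH K hKlt hK1
      set r := rAP (Fin n → ZMod p) with hrdef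
      set Bp := r * (3 ^ (Nat.clog 3 p) - 1) + 1 with hBpdef
      have hBpZ : Zs n p Bp := Zs_prime n p hpp.pos
      refine ⟨p * (bK - 1) + Bp, by rw [hBpdef]; omega, ?_, ?_⟩
      · have := Zs_comp (n := n) hpp.one_le hK1 hbK1 hBpZ hbKZ
        rwa [hkeq] at this
      · have h1 : p * (bK - 1) ≤ p * D n K := Nat.mul_le_mul_left _ (by omega)
        have h2 : Bp ≤ (3 * p - 4) * r + 1 := by
          have h3 := pow_clog_le hpp.two_le
          have : r * (3 ^ (Nat.clog 3 p) - 1) ≤ r * (3 * p - 4) :=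
            Nat.mul_le_mul_left _ h3
          rw [hBpdef]
          calc r * (3 ^ (Nat.clog 3 p) - 1) + 1 ≤ r * (3 * p - 4) + 1 := by omega
          _ = (3 * p - 4) * r + 1 := by ring_nf
        have h4 := D_rec n hpp hK1 (p := p) (K := K)
        rw [hkeq, ← hrdef] at h4
        omega

lemma exponent_eq {n k : ℕ} (hn : 0 < n) (hk : 1 ≤ k) :
    AddMonoid.exponent (Fin n → ZMod k) = k := by
  haveI : NeZero k := ⟨by omega⟩
  apply Nat.dvd_antisymm
  · apply AddMonoid.exponent_dvd_of_forall_nsmul_eq_zero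
    intro g
    funext i
    show k • g i = 0
    rw [nsmul_eq_mul, ZMod.natCast_self, zero_mul]
  · set g : Fin n → ZMod k := fun _ => 1 with hg
    have h1 : addOrderOf g ∣ AddMonoid.exponent (Fin n → ZMod k) :=
      AddMonoid.addOrder_dvd_exponent g
    have h2 : k ∣ addOrderOf g := by
      have h3 : addOrderOf g • g = 0 := addOrderOf_nsmul_eq_zero g
      have h4 : addOrderOf g • (1 : ZMod k) = 0 := congrFun h3 ⟨0, hn⟩
      rw [nsmul_eq_mul, mul_one] at h4
      exact (ZMod.natCast_eq_zero_iff _ _).mp h4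
    exact h2.trans h1


end EGZaux

/-- **Corollary 2.** Let k ≥ 2 be an integer with distinct prime factors p_1, ..., p_m. Then for
every positive integer n, 𝔰((ℤ/kℤ)^n) < 3k·(r(F_{p_1}^n) + ... + r(F_{p_m}^n)). -/
theorem stmt1 (k : ℕ) (hk : 2 ≤ k) (n : ℕ) (hn : 0 < n) :
    EGZ (Fin n → ZMod k) < 3 * k * ∑ q ∈ k.primeFactors, rAP (Fin n → ZMod q) := by
  obtain ⟨b, hb1, hbZ, hbD⟩ := EGZaux.main_zs n k (by omega)
  have hq0 : k.minFac ∈ k.primeFactors := by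
    rw [Nat.mem_primeFactors]
    exact ⟨Nat.minFac_prime (by omega), Nat.minFac_dvd k, by omega⟩
  have hR1 : 1 ≤ ∑ q ∈ k.primeFactors, rAP (Fin n → ZMod q) := by
    haveI : NeZero k.minFac := ⟨(Nat.minFac_prime (by omega : k ≠ 1)).ne_zero⟩
    calc (1:ℕ) ≤ rAP (Fin n → ZMod k.minFac) := EGZaux.rAP_pos
    _ ≤ ∑ q ∈ k.primeFactors, rAP (Fin n → ZMod q) :=
        Finset.single_le_sum (f := fun q => rAP (Fin n → ZMod q)) (fun i _ => Nat.zero_le _) hq0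
  have hEGZ : EGZ (Fin n → ZMod k) ≤ b := by
    apply Nat.sInf_le
    refine ⟨by omega, ?_⟩
    intro m hm
    obtain ⟨t, ht, htc, hts⟩ := hbZ m hm
    exact ⟨t, ht, htc.trans (EGZaux.exponent_eq hn (by omega)).symm, hts⟩
  have hDb := EGZaux.D_bound (n := n) hk hR1
  omega
end

section
/- Let p ≥ 3 be a prime and n ≥ 1 an integer. Then 𝔰(F_p^{n}) ≤ 2p·r(F_p^{n}). -/
section FoxSauermannAux

set_option linter.unusedSectionVars false

variable {G : Type*} [AddCommGroup G] [DecidableEq G]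

/-- A block: submultiset realizing every size `s ≤ N` with sum `s • v`. -/
def GoodFS (B : Multiset G) (v : G) (N : ℕ) : Prop :=
  ∀ s ≤ N, ∃ t ≤ B, Multiset.card t = s ∧ t.sum = s • v

lemma goodFS_single (g : G) : GoodFS ({g} : Multiset G) g 1 := by
  intro s hs
  interval_cases s
  · exact ⟨0, zero_le, by simp, by simp⟩
  · exact ⟨{g}, le_rfl, by simp, by simp⟩

lemma goodFS_join {B1 B2 : Multiset G} {v : G} {N1 N2 : ℕ}
    (h1 : GoodFS B1 v N1) (h2 : GoodFS B2 v N2) : GoodFS (B1 + B2) v (N1 + N2) := by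
  intro s hs
  obtain ⟨t1, ht1, hc1, hs1⟩ := h1 (min s N1) (min_le_right _ _)
  obtain ⟨t2, ht2, hc2, hs2⟩ := h2 (s - min s N1) (by omega)
  refine ⟨t1 + t2, add_le_add ht1 ht2, ?_, ?_⟩
  · rw [Multiset.card_add, hc1, hc2]; omega
  · rw [Multiset.sum_add, hs1, hs2, ← add_nsmul]
    congr 1
    omega

lemma goodFS_triple {B1 B2 B3 : Multiset G} {x y z : G} {N : ℕ} (hN : 1 ≤ N)
    (hxz : x + z = y + y)
    (h1 : GoodFS B1 x N) (h2 : GoodFS B2 y N) (h3 : GoodFS B3 z N) :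
    GoodFS (B1 + B2 + B3) y (3 * N) := by
  intro s hs
  obtain ⟨a, b, ha, hb, hab⟩ : ∃ a b, a ≤ N ∧ b ≤ N ∧ 2 * a + b = s := by
    rcases le_or_gt s N with h | h
    · exact ⟨0, s, by omega, by omega, by omega⟩
    · exact ⟨(s - N + 1) / 2, s - 2 * ((s - N + 1) / 2), by omega, by omega, by omega⟩
  obtain ⟨t1, ht1, hc1, hs1⟩ := h1 a ha
  obtain ⟨t2, ht2, hc2, hs2⟩ := h2 b hb
  obtain ⟨t3, ht3, hc3, hs3⟩ := h3 a ha
  refine ⟨t1 + t2 + t3, add_le_add (add_le_add ht1 ht2) ht3, ?_, ?_⟩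
  · rw [Multiset.card_add, Multiset.card_add, hc1, hc2, hc3]; omega
  · rw [Multiset.sum_add, Multiset.sum_add, hs1, hs2, hs3]
    have e1 : a • x + b • y + a • z = a • (x + z) + b • y := by
      rw [smul_add]; abel
    rw [e1, hxz]
    have e2 : a • (y + y) = (2 * a) • y := by
      rw [smul_add, ← add_nsmul, two_mul]
    rw [e2, ← add_nsmul, hab]

lemma tripleFS_le {α : Type*} (M : Multiset α) (a b c : α) (ha : a ∈ M) (hb : b ∈ M)
    (hc : c ∈ M) (hab : a ≠ b) (hac : a ≠ c) (hbc : b ≠ c) :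
    ({a, b, c} : Multiset α) ≤ M := by
  classical
  rw [Multiset.le_iff_count]
  intro w
  have h1 : 1 ≤ Multiset.count a M := Multiset.one_le_count_iff_mem.2 ha
  have h2 : 1 ≤ Multiset.count b M := Multiset.one_le_count_iff_mem.2 hb
  have h3 : 1 ≤ Multiset.count c M := Multiset.one_le_count_iff_mem.2 hc
  simp only [Multiset.insert_eq_cons, Multiset.count_cons, Multiset.count_singleton]
  by_cases hwa : w = a <;> by_cases hwb : w = b <;> by_cases hwc : w = c <;>
    simp [hwa, hwb, hwc, hab, hac, hbc, Ne.symm hab, Ne.symm hac, Ne.symm hbc] <;> omega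


lemma extractFS_triple {r : ℕ} (hA : ∀ A : Finset G, APFree A → A.card ≤ r)
    (f : α → G) (M : Multiset α) (hM : 2 * r + 1 ≤ Multiset.card M) :
    ∃ a b c, ({a, b, c} : Multiset α) ≤ M ∧ f a + f c = f b + f b := by
  classical
  by_cases h3 : ∃ v, 3 ≤ (M.map f).count v
  · obtain ⟨v, hv⟩ := h3
    rw [Multiset.count_map] at hv
    set W := M.filter (fun a => v = f a) with hWdef
    have hlen : 3 ≤ W.toList.length := by rwa [Multiset.length_toList]
    have hsub : (↑(W.toList.take 3) : Multiset α) ≤ W := by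
      conv_rhs => rw [← Multiset.coe_toList W]
      exact (List.take_sublist _ _).subperm
    have hc3 : Multiset.card (↑(W.toList.take 3) : Multiset α) = 3 := by
      rw [Multiset.coe_card, List.length_take]
      omega
    obtain ⟨a, b, c, habc⟩ := Multiset.card_eq_three.1 hc3
    have hmem : ∀ x ∈ ({a, b, c} : Multiset α), f x = v := by
      intro x hx
      have : x ∈ W := Multiset.mem_of_le hsub (habc ▸ hx)
      exact (Multiset.of_mem_filter this).symm
    refine ⟨a, b, c, (habc ▸ hsub).trans (Multiset.filter_le _ _), ?_⟩
    rw [hmem a (by simp), hmem b (by simp), hmem c (by simp)]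
  · push_neg at h3
    set V := (M.map f).toFinset with hV
    have hcard : 2 * r + 1 ≤ 2 * V.card := by
      calc 2 * r + 1 ≤ Multiset.card (M.map f) := by rwa [Multiset.card_map]
        _ = ∑ v ∈ V, (M.map f).count v := (Multiset.toFinset_sum_count_eq _).symm
        _ ≤ ∑ _v ∈ V, 2 := Finset.sum_le_sum (fun v _ => by have := h3 v; omega)
        _ = 2 * V.card := by rw [Finset.sum_const]; ring
    have hnot : ¬ APFree V := by
      intro h
      have := hA V h
      omega
    unfold APFree at hnot
    push_neg at hnot
    obtain ⟨x, hx, y, hy, z, hz, hxz, hsum⟩ := hnot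
    obtain ⟨a, ha, hfa⟩ := Multiset.mem_map.1 (Multiset.mem_toFinset.1 hx)
    obtain ⟨b, hb, hfb⟩ := Multiset.mem_map.1 (Multiset.mem_toFinset.1 hy)
    obtain ⟨c, hc, hfc⟩ := Multiset.mem_map.1 (Multiset.mem_toFinset.1 hz)
    have hyx : y ≠ x := by
      intro h
      subst h
      exact hxz (add_left_cancel hsum).symm
    have hyz : y ≠ z := by
      intro h
      subst h
      exact hxz (add_right_cancel hsum)
    refine ⟨a, b, c, tripleFS_le M a b c ha hb hc ?_ ?_ ?_, by rw [hfa, hfb, hfc]; exact hsum⟩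
    · intro h; exact hyx (by rw [← hfa, ← hfb, h])
    · intro h; exact hxz (by rw [← hfa, ← hfc, h])
    · intro h; exact hyz (by rw [← hfb, ← hfc, h])

/-- One extraction round: from a pool of level-`N` blocks produce a pool of level-`3N` blocks. -/
lemma roundFS {r N : ℕ} (hN : 1 ≤ N) (hA : ∀ A : Finset G, APFree A → A.card ≤ r) :
    ∀ m (pool : Multiset (G × Multiset G)), Multiset.card pool = m →
    (∀ e ∈ pool, GoodFS e.2 e.1 N) →
    ∃ pool' : Multiset (G × Multiset G),
      (∀ e ∈ pool', GoodFS e.2 e.1 (3 * N)) ∧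
      (pool'.map Prod.snd).sum ≤ (pool.map Prod.snd).sum ∧
      Multiset.card pool ≤ 3 * Multiset.card pool' + 2 * r := by
  intro m
  induction m using Nat.strong_induction_on with
  | _ m ih =>
    intro pool hm hGood
    rcases le_or_gt (Multiset.card pool) (2 * r) with hle | hgt
    · exact ⟨0, by simp, by simp, by simpa using hle⟩
    · obtain ⟨a, b, c, hsub, hap⟩ := extractFS_triple hA Prod.fst pool (by omega)
      have hTcard : Multiset.card ({a, b, c} : Multiset (G × Multiset G)) = 3 := by
        simp [Multiset.insert_eq_cons]
      have hrec : pool - {a, b, c} + {a, b, c} = pool := tsub_add_cancel_of_le hsub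
      have hcard' : Multiset.card (pool - {a, b, c}) = m - 3 := by
        rw [Multiset.card_sub hsub, hm, hTcard]
      obtain ⟨pool', h1, h2, h3⟩ := ih (m - 3) (by omega) (pool - {a, b, c}) hcard'
        (fun e he => hGood e (Multiset.mem_of_le tsub_le_self he))
      have hamem : a ∈ pool := Multiset.mem_of_le hsub (by simp)
      have hbmem : b ∈ pool := Multiset.mem_of_le hsub (by simp)
      have hcmem : c ∈ pool := Multiset.mem_of_le hsub (by simp)
      refine ⟨pool' + {(b.1, a.2 + b.2 + c.2)}, ?_, ?_, ?_⟩
      · intro e he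
        rcases Multiset.mem_add.1 he with he | he
        · exact h1 e he
        · rw [Multiset.mem_singleton] at he
          subst he
          exact goodFS_triple hN hap (hGood a hamem) (hGood b hbmem) (hGood c hcmem)
      · have hsplit : (pool.map Prod.snd).sum
            = ((pool - {a, b, c}).map Prod.snd).sum + (a.2 + b.2 + c.2) := by
          conv_lhs => rw [← hrec]
          rw [Multiset.map_add, Multiset.sum_add]
          congr 1
          simp [Multiset.insert_eq_cons, add_assoc]
        rw [hsplit, Multiset.map_add, Multiset.sum_add]
        have : (Multiset.map Prod.snd ({(b.1, a.2 + b.2 + c.2)} : Multiset (G × Multiset G))).sum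
            = a.2 + b.2 + c.2 := by simp
        rw [this]
        exact add_le_add h2 le_rfl
      · rw [Multiset.card_add]
        simp only [Multiset.card_singleton]
        rw [hcard'] at h3
        omega

lemma msumFS_le {s t : Multiset (Multiset G)} (h : s ≤ t) : s.sum ≤ t.sum := by
  obtain ⟨u, rfl⟩ := Multiset.le_iff_exists_add.1 h
  rw [Multiset.sum_add]
  exact Multiset.le_add_right _ _

lemma classFS {v : G} {N : ℕ} : ∀ (l : Multiset (G × Multiset G)),
    (∀ e ∈ l, v = e.1) → (∀ e ∈ l, GoodFS e.2 e.1 N) →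
    GoodFS ((l.map Prod.snd).sum) v (Multiset.card l * N) := by
  intro l
  induction l using Multiset.induction with
  | empty =>
    intro _ _ s hs
    simp only [Multiset.card_zero, zero_mul, Nat.le_zero] at hs
    subst hs
    exact ⟨0, le_rfl, by simp, by simp⟩
  | cons a t ih =>
    intro hv hG
    have h1 : GoodFS a.2 v N := by
      have h := hG a (Multiset.mem_cons_self a t)
      rwa [← hv a (Multiset.mem_cons_self a t)] at h
    have h2 := ih (fun e he => hv e (Multiset.mem_cons_of_mem he))
      (fun e he => hG e (Multiset.mem_cons_of_mem he))
    have h3 := goodFS_join h1 h2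
    have hc : Multiset.card (a ::ₘ t) * N = N + Multiset.card t * N := by
      rw [Multiset.card_cons]; ring
    rw [hc, Multiset.map_cons, Multiset.sum_cons]
    exact h3

/-- The core combinatorial theorem. -/
lemma mainFS_core (p r : ℕ) (hp3 : 3 ≤ p) (hodd : p % 2 = 1) (hr : 1 ≤ r)
    (hzero : ∀ g : G, p • g = 0)
    (hA : ∀ A : Finset G, APFree A → A.card ≤ r)
    (S : Multiset G) (hS : Multiset.card S = 2 * p * r) :
    ∃ t ≤ S, Multiset.card t = p ∧ t.sum = 0 := by
  classical
  set K := Nat.clog 3 p with hK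
  have hK1 : 1 ≤ K := Nat.clog_pos (by norm_num) (by omega)
  set j := K - 1 with hj
  set Q := 3 ^ j with hQ
  have hQ1 : 1 ≤ Q := Nat.one_le_pow j 3 (by norm_num)
  have h3j : Q < p := by
    have h := Nat.pow_pred_clog_lt_self (b := 3) (by norm_num) (x := p) (by omega)
    simpa [hQ, hj, hK, Nat.pred_eq_sub_one] using h
  have h3K : p ≤ 3 * Q := by
    have h := Nat.le_pow_clog (b := 3) (by norm_num) p
    have hjk : j + 1 = K := by omega
    calc p ≤ 3 ^ K := h
      _ = 3 * Q := by rw [← hjk, pow_succ, hQ, mul_comm]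
  -- iterated extraction rounds
  have hrounds : ∀ i : ℕ, ∃ pool : Multiset (G × Multiset G),
      (∀ e ∈ pool, GoodFS e.2 e.1 (3 ^ i)) ∧
      (pool.map Prod.snd).sum ≤ S ∧
      2 * p * r + r ≤ 3 ^ i * (Multiset.card pool + r) := by
    intro i
    induction i with
    | zero =>
      refine ⟨S.map (fun g => (g, ({g} : Multiset G))), ?_, ?_, ?_⟩
      · intro e he
        obtain ⟨g, hg, rfl⟩ := Multiset.mem_map.1 he
        simpa using goodFS_single g
      · rw [Multiset.map_map]
        simp only [Function.comp]
        rw [Multiset.sum_map_singleton]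
      · simp [hS, Multiset.card_map]
    | succ i ihp =>
      obtain ⟨pool, hGood, hsum, hcount⟩ := ihp
      obtain ⟨pool', h1, h2, h3⟩ := roundFS (Nat.one_le_pow i 3 (by norm_num)) hA
        (Multiset.card pool) pool rfl hGood
      refine ⟨pool', ?_, h2.trans hsum, ?_⟩
      · intro e he
        have := h1 e he
        rwa [show 3 * 3 ^ i = 3 ^ (i + 1) by rw [pow_succ, mul_comm]] at this
      · calc 2 * p * r + r ≤ 3 ^ i * (Multiset.card pool + r) := hcount
          _ ≤ 3 ^ i * (3 * (Multiset.card pool' + r)) :=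
            Nat.mul_le_mul_left _ (by omega)
          _ = 3 ^ (i + 1) * (Multiset.card pool' + r) := by rw [pow_succ]; ring
  obtain ⟨pool, hGood, hsumS, hcount⟩ := hrounds j
  -- value classes
  set V := (pool.map Prod.fst).toFinset with hV
  have hclassGood : ∀ v : G,
      GoodFS (((pool.filter (fun e => v = e.1)).map Prod.snd).sum) v
        (Multiset.card (pool.filter (fun e => v = e.1)) * Q) := by
    intro v
    exact classFS _ (fun e he => (Multiset.mem_filter.1 he).2)
      (fun e he => hGood e (Multiset.mem_of_le (Multiset.filter_le _ _) he))
  have hclassle : ∀ v : G,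
      ((pool.filter (fun e => v = e.1)).map Prod.snd).sum ≤ S := by
    intro v
    refine le_trans ?_ hsumS
    exact msumFS_le (Multiset.map_le_map (Multiset.filter_le _ _))
  have hcnt : ∀ v : G,
      Multiset.card (pool.filter (fun e => v = e.1)) = (pool.map Prod.fst).count v := by
    intro v
    rw [Multiset.count_map]
  by_cases hbig : ∃ v ∈ V, p ≤ Multiset.card (pool.filter (fun e => v = e.1)) * Q
  · obtain ⟨v, hv, hvp⟩ := hbig
    obtain ⟨t, ht, htc, hts⟩ := hclassGood v p hvp
    exact ⟨t, ht.trans (hclassle v), htc, by rw [hts, hzero]⟩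
  · push_neg at hbig
    -- mass bound gives at least r+1 distinct values
    have hmass : 2 * p * r + r ≤ Q * Multiset.card pool + Q * r := by
      rw [← Nat.mul_add]
      exact hcount
    have hQr : Q * r ≤ (p - 1) * r := Nat.mul_le_mul_right r (by omega)
    have hsubmul : (p - 1) * r = p * r - r := by rw [Nat.sub_mul, one_mul]
    have hpoolmass : p * r + 2 * r ≤ Q * Multiset.card pool := by
      have h2pr : 2 * p * r = 2 * (p * r) := by ring
      have hprr : r ≤ p * r := Nat.le_mul_of_pos_left r (by omega)
      omega
    have hcardsum : Multiset.card pool = ∑ v ∈ V, (pool.map Prod.fst).count v := by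
      rw [Multiset.toFinset_sum_count_eq, Multiset.card_map]
    have hVbound : Q * Multiset.card pool ≤ V.card * (p - 1) := by
      calc Q * Multiset.card pool = ∑ v ∈ V, Q * (pool.map Prod.fst).count v := by
            rw [hcardsum, Finset.mul_sum]
        _ ≤ ∑ _v ∈ V, (p - 1) := Finset.sum_le_sum (fun v hv => by
            have h := hbig v hv
            rw [hcnt v] at h
            rw [mul_comm]
            omega)
        _ = V.card * (p - 1) := by rw [Finset.sum_const, smul_eq_mul]
    have hVr : r + 1 ≤ V.card := by
      by_contra hcon
      push_neg at hcon
      have : V.card * (p - 1) ≤ r * (p - 1) := Nat.mul_le_mul_right _ (by omega)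
      have hrp : r * (p - 1) = p * r - r := by rw [Nat.mul_sub, mul_one, mul_comm]
      omega
    -- extract an AP among the class values
    have hnotAP : ¬ APFree V := fun h => by have := hA V h; omega
    unfold APFree at hnotAP
    push_neg at hnotAP
    obtain ⟨x, hx, y, hy, z, hz, hxz, hxzy⟩ := hnotAP
    have hyx : y ≠ x := fun h => by subst h; exact hxz (add_left_cancel hxzy).symm
    have hyz : y ≠ z := fun h => by subst h; exact hxz (add_right_cancel hxzy)
    -- class sizes
    have hcntpos : ∀ v ∈ V, 1 ≤ (pool.map Prod.fst).count v := by
      intro v hv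
      exact Multiset.one_le_count_iff_mem.2 (Multiset.mem_toFinset.1 hv)
    set Wx := Multiset.card (pool.filter (fun e => x = e.1)) * Q with hWx
    set Wy := Multiset.card (pool.filter (fun e => y = e.1)) * Q with hWy
    set Wz := Multiset.card (pool.filter (fun e => z = e.1)) * Q with hWz
    have hfx1 : 1 ≤ Multiset.card (pool.filter (fun e => x = e.1)) := by
      rw [hcnt x]; exact hcntpos x hx
    have hfy1 : 1 ≤ Multiset.card (pool.filter (fun e => y = e.1)) := by
      rw [hcnt y]; exact hcntpos y hy
    have hfz1 : 1 ≤ Multiset.card (pool.filter (fun e => z = e.1)) := by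
      rw [hcnt z]; exact hcntpos z hz
    have hWxQ : Q ≤ Wx := by rw [hWx]; exact Nat.le_mul_of_pos_left Q (by omega)
    have hWyQ : Q ≤ Wy := by rw [hWy]; exact Nat.le_mul_of_pos_left Q (by omega)
    have hWzQ : Q ≤ Wz := by rw [hWz]; exact Nat.le_mul_of_pos_left Q (by omega)
    obtain ⟨a, b, hax, haz, hby, habp⟩ :
        ∃ a b, a ≤ Wx ∧ a ≤ Wz ∧ b ≤ Wy ∧ 2 * a + b = p := by
      rcases le_or_gt p (2 * min Wx Wz) with h | h
      · exact ⟨(p - 1) / 2, 1, by omega, by omega, by omega, by omega⟩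
      · exact ⟨min Wx Wz, p - 2 * min Wx Wz, by omega, by omega, by omega, by omega⟩
    obtain ⟨t1, ht1, hc1, hs1⟩ := hclassGood x a hax
    obtain ⟨t2, ht2, hc2, hs2⟩ := hclassGood y b hby
    obtain ⟨t3, ht3, hc3, hs3⟩ := hclassGood z a haz
    have hdisj : pool.filter (fun e => x = e.1) + pool.filter (fun e => y = e.1)
        + pool.filter (fun e => z = e.1) ≤ pool := by
      rw [Multiset.le_iff_count]
      intro w
      rw [Multiset.count_add, Multiset.count_add, Multiset.count_filter,
        Multiset.count_filter, Multiset.count_filter]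
      by_cases h1 : x = w.1 <;> by_cases h2 : y = w.1 <;> by_cases h3 : z = w.1 <;>
        first
          | exact absurd (‹x = w.1›.trans ‹y = w.1›.symm) (Ne.symm hyx)
          | exact absurd (‹x = w.1›.trans ‹z = w.1›.symm) hxz
          | exact absurd (‹y = w.1›.trans ‹z = w.1›.symm) hyz
          | (simp only [if_pos, if_neg, h1, h2, h3, if_true, if_false]; omega)
    refine ⟨t1 + t2 + t3, ?_, ?_, ?_⟩
    · refine le_trans (add_le_add (add_le_add ht1 ht2) ht3) (le_trans ?_ hsumS)
      have h := msumFS_le (Multiset.map_le_map (f := Prod.snd) hdisj)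
      rwa [Multiset.map_add, Multiset.map_add, Multiset.sum_add, Multiset.sum_add] at h
    · rw [Multiset.card_add, Multiset.card_add, hc1, hc2, hc3]
      omega
    · rw [Multiset.sum_add, Multiset.sum_add, hs1, hs2, hs3]
      have e1 : a • x + b • y + a • z = a • (x + z) + b • y := by
        rw [smul_add]; abel
      rw [e1, hxzy, smul_add, ← add_nsmul, ← add_nsmul,
        show a + a + b = p by omega, hzero y]


end FoxSauermannAux

/-- **Theorem 4.** Let p ≥ 3 be a prime and n ≥ 1 an integer. Then 𝔰(F_p^n) ≤ 2p·r(F_p^n). -/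
theorem stmt3 (p n : ℕ) (hp : p.Prime) (hp3 : 3 ≤ p) (hn : 1 ≤ n) :
    EGZ (Fin n → ZMod p) ≤ 2 * p * rAP (Fin n → ZMod p) := by

  haveI : Fact p.Prime := ⟨hp⟩
  haveI : Fact (1 < p) := ⟨by omega⟩
  set G := Fin n → ZMod p with hG
  have hbdd : BddAbove {k | ∃ A : Finset G, APFree A ∧ A.card = k} := by
    refine ⟨Fintype.card G, ?_⟩
    rintro k ⟨A, -, rfl⟩
    exact Finset.card_le_univ A
  set r := rAP G with hr
  have hA : ∀ A : Finset G, APFree A → A.card ≤ r := fun A h =>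
    le_csSup hbdd ⟨A, h, rfl⟩
  have hr1 : 1 ≤ r := by
    refine le_csSup hbdd ⟨{0}, ?_, Finset.card_singleton 0⟩
    intro x hx y hy z hz hxz
    rw [Finset.mem_singleton] at hx hz
    exact absurd (hx.trans hz.symm) hxz
  have hzero : ∀ g : G, p • g = 0 := by
    intro g
    funext i
    rw [Pi.smul_apply, nsmul_eq_mul, ZMod.natCast_self, zero_mul]
    rfl
  have hodd : p % 2 = 1 := Nat.odd_iff.1 (hp.odd_of_ne_two (by omega))
  have hexp : AddMonoid.exponent G = p := by
    have hdvd : AddMonoid.exponent G ∣ p :=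
      AddMonoid.exponent_dvd_of_forall_nsmul_eq_zero hzero
    rcases Nat.Prime.eq_one_or_self_of_dvd hp _ hdvd with h1 | h1
    · exfalso
      have hne : (fun _ : Fin n => (1 : ZMod p)) ≠ (0 : G) := by
        intro h
        have h0 := congrFun h ⟨0, by omega⟩
        exact one_ne_zero h0
      have h2 := AddMonoid.exponent_nsmul_eq_zero (G := G) (fun _ : Fin n => (1 : ZMod p))
      rw [h1, one_nsmul] at h2
      exact hne h2
    · exact h1
  refine Nat.sInf_le ⟨?_, ?_⟩
  · have h2p : 0 < 2 * p := by omega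
    exact Nat.mul_pos h2p hr1
  · intro m hm
    rw [hexp]
    exact mainFS_core p r hp3 hodd hr1 hzero hA m hm
end

section
/- Let p ≥ 3 be a prime and n ≥ 1 an integer. If A ⊆ F_p^{n} does not contain p distinct elements summing to zero, then for every x ∈ A, the number of three-term arithmetic progressions contained in A with middle term x is at most (p-3)/2. -/
lemma aux_smul {G : Type*} [AddCommGroup G] (m : ℕ) (v : G) :
    v + m • (v + v) = (2 * m + 1) • v := by
  rw [smul_add, two_mul, add_nsmul, add_nsmul, one_nsmul]
  abel

/-- **Lemma 5.** Let p ≥ 3 be a prime and n ≥ 1. If A ⊆ F_p^n does not contain p distinct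
elements summing to zero, then for every x ∈ A, the number of three-term arithmetic progressions
contained in A with middle term x (i.e. three-element subsets {y, x, z} of A with y ≠ z and
y + z = 2x) is at most (p-3)/2. -/
theorem stmt4 (p n : ℕ) (hp : p.Prime) (hp3 : 3 ≤ p) (hn : 1 ≤ n)
    (A : Finset (Fin n → ZMod p))
    (hA : ¬ ∃ B ⊆ A, B.card = p ∧ ∑ v ∈ B, v = 0) :
    ∀ x ∈ A,
      {s : Finset (Fin n → ZMod p) | s ⊆ A ∧ s.card = 3 ∧ x ∈ s ∧
        ∃ y ∈ s, ∃ z ∈ s, y ≠ z ∧ y + z = x + x}.ncard ≤ (p - 3) / 2 := by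
  intro x hx
  set S : Set (Finset (Fin n → ZMod p)) := {s | s ⊆ A ∧ s.card = 3 ∧ x ∈ s ∧
        ∃ y ∈ s, ∃ z ∈ s, y ≠ z ∧ y + z = x + x} with hSdef
  have hSfin : S.Finite := by
    apply (A.powerset.finite_toSet).subset
    rintro s ⟨h1, -⟩
    exact Finset.mem_coe.mpr (Finset.mem_powerset.mpr h1)
  -- structure lemma: for s ∈ S and w ∈ s.erase x, s.erase x = {w, 2x - w} with the two distinct
  have key : ∀ s ∈ S, ∀ w ∈ s.erase x,
      s.erase x = {w, x + x - w} ∧ w ≠ x + x - w := by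
    rintro s ⟨hsA, hcard, hxs, y, hy, z, hz, hyz, hsum⟩ w hw
    have hyx : y ≠ x := by
      rintro rfl
      exact hyz (add_left_cancel hsum).symm
    have hzx : z ≠ x := by
      rintro rfl
      exact hyz (add_right_cancel hsum)
    have hpair : ({y, z} : Finset (Fin n → ZMod p)) ⊆ s.erase x := by
      intro a ha
      rcases Finset.mem_insert.mp ha with rfl | ha
      · exact Finset.mem_erase.mpr ⟨hyx, hy⟩
      · rw [Finset.mem_singleton] at ha
        subst ha
        exact Finset.mem_erase.mpr ⟨hzx, hz⟩
    have hcard2 : (s.erase x).card = 2 := by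
      rw [Finset.card_erase_of_mem hxs, hcard]
    have hpcard : ({y, z} : Finset (Fin n → ZMod p)).card = 2 := by
      rw [Finset.card_insert_of_notMem (by simpa using hyz), Finset.card_singleton]
    have heq : s.erase x = ({y, z} : Finset (Fin n → ZMod p)) :=
      (Finset.eq_of_subset_of_card_le hpair (by omega)).symm
    have hzval : z = x + x - y := eq_sub_of_add_eq' hsum
    have hyval : y = x + x - z := eq_sub_of_add_eq hsum
    rw [heq] at hw
    rcases Finset.mem_insert.mp hw with rfl | hw
    · refine ⟨by rw [heq, ← hzval], by rw [← hzval]; exact hyz⟩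
    · rw [Finset.mem_singleton] at hw
      subst hw
      refine ⟨by rw [heq, Finset.pair_comm, ← hyval], by rw [← hyval]; exact fun h => hyz h.symm⟩
  have hcard2 : ∀ s ∈ S, (s.erase x).card = 2 := by
    rintro s ⟨hsA, hcard, hxs, -⟩
    rw [Finset.card_erase_of_mem hxs, hcard]
  have hsum2 : ∀ s ∈ S, ∑ v ∈ s.erase x, v = x + x := by
    intro s hs
    have hne : (s.erase x).Nonempty := by
      rw [← Finset.card_pos, hcard2 s hs]; omega
    obtain ⟨w, hw⟩ := hne
    obtain ⟨heq, hne'⟩ := key s hs w hw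
    rw [heq, Finset.sum_insert (by simpa using hne'), Finset.sum_singleton]
    ring
  -- disjointness
  have hdisj : ∀ s ∈ S, ∀ t ∈ S, s ≠ t → Disjoint (s.erase x) (t.erase x) := by
    intro s hs t ht hst
    rw [Finset.disjoint_left]
    intro w hws hwt
    apply hst
    have hxs : x ∈ s := hs.2.2.1
    have hxt : x ∈ t := ht.2.2.1
    rw [← Finset.insert_erase hxs, ← Finset.insert_erase hxt,
      (key s hs w hws).1, (key t ht w hwt).1]
  by_contra hlt
  push_neg at hlt
  set k : ℕ := (p - 3) / 2 + 1 with hk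
  have hodd : p % 2 = 1 := Nat.odd_iff.mp (hp.odd_of_ne_two (by omega))
  have hkS : k ≤ hSfin.toFinset.card := by
    rw [Set.ncard_eq_toFinset_card S hSfin] at hlt
    omega
  obtain ⟨T, hTsub, hTcard⟩ := Finset.exists_subset_card_eq hkS
  have hTS : ∀ s ∈ T, s ∈ S := fun s hs => hSfin.mem_toFinset.mp (hTsub hs)
  set B : Finset (Fin n → ZMod p) :=
    insert x (T.biUnion (fun s => s.erase x)) with hB
  have hxnot : x ∉ T.biUnion (fun s => s.erase x) := by
    intro h
    obtain ⟨s, hs, hxe⟩ := Finset.mem_biUnion.mp h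
    exact (Finset.mem_erase.mp hxe).1 rfl
  have hBA : B ⊆ A := by
    intro a ha
    rcases Finset.mem_insert.mp ha with rfl | ha
    · exact hx
    · obtain ⟨s, hs, has⟩ := Finset.mem_biUnion.mp ha
      exact (hTS s hs).1 (Finset.erase_subset x s has)
  have hbudisj : ∀ s ∈ T, ∀ t ∈ T, s ≠ t → Disjoint (s.erase x) (t.erase x) :=
    fun s hs t ht => hdisj s (hTS s hs) t (hTS t ht)
  have hBcard : B.card = p := by
    rw [hB, Finset.card_insert_of_notMem hxnot, Finset.card_biUnion hbudisj]
    rw [Finset.sum_congr rfl (fun s hs => hcard2 s (hTS s hs)), Finset.sum_const,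
      smul_eq_mul, hTcard]
    omega
  have hBsum : ∑ v ∈ B, v = 0 := by
    rw [hB, Finset.sum_insert hxnot, Finset.sum_biUnion hbudisj,
      Finset.sum_congr rfl (fun s hs => hsum2 s (hTS s hs)), Finset.sum_const, hTcard]
    rw [aux_smul k x]
    have hkp : 2 * k + 1 = p := by omega
    rw [hkp]
    funext i
    simp [ZMod.natCast_self]
  exact hA ⟨B, hBA, hBcard, hBsum⟩
end

section
/- Let p ≥ 3 be a prime and n ≥ 1 an integer. If A ⊆ F_p^{n} does not contain p distinct elements summing to zero, then the total number of three-term arithmetic progressions contained in A is at most ((p-3)/2)·|A|. -/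
open scoped Classical

lemma pairBound (p n : ℕ) (hp : p.Prime) (hp3 : 3 ≤ p)
    (A : Finset (Fin n → ZMod p))
    (hA : ¬ ∃ B ⊆ A, B.card = p ∧ ∑ v ∈ B, v = 0)
    (y : Fin n → ZMod p) (hy : y ∈ A) :
    (((A.erase y).powersetCard 2).filter
      (fun t => ∃ x ∈ t, ∃ z ∈ t, x ≠ z ∧ x + z = y + y)).card ≤ (p - 3) / 2 := by
  set P := ((A.erase y).powersetCard 2).filter
      (fun t => ∃ x ∈ t, ∃ z ∈ t, x ≠ z ∧ x + z = y + y) with hP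
  have hPst : ∀ t ∈ P, t.card = 2 ∧ t ⊆ A.erase y ∧ (∑ v ∈ t, v) = y + y ∧
      ∀ u ∈ t, t = {u, y + y - u} := by
    intro t ht
    rw [hP, Finset.mem_filter, Finset.mem_powersetCard] at ht
    obtain ⟨⟨hsub, hcard⟩, x, hx, z, hz, hxz, hsum⟩ := ht
    have htxz : t = {x, z} := by
      refine (Finset.eq_of_subset_of_card_le ?_ ?_).symm
      · intro u hu
        rcases Finset.mem_insert.1 hu with rfl | hu
        · exact hx
        · rw [Finset.mem_singleton.1 hu]; exact hz
      · rw [hcard, Finset.card_insert_of_notMem (by simpa using hxz), Finset.card_singleton]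
    refine ⟨hcard, hsub, ?_, ?_⟩
    · rw [htxz, Finset.sum_pair hxz, hsum]
    · intro u hu
      rw [htxz] at hu ⊢
      rcases Finset.mem_insert.1 hu with rfl | hu
      · have : z = y + y - u := by
          rw [eq_sub_iff_add_eq, add_comm, hsum]
        rw [← this]
      · rw [Finset.mem_singleton.1 hu]
        have : x = y + y - z := by
          rw [eq_sub_iff_add_eq, hsum]
        rw [Finset.pair_comm, ← this]
  by_contra hcon
  push_neg at hcon
  obtain ⟨k, hk⟩ := hp.odd_of_ne_two (by omega)
  have hk1 : 1 ≤ k := by omega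
  have hklt : (p - 1) / 2 ≤ P.card := by omega
  obtain ⟨Q, hQP, hQcard⟩ := Finset.exists_subset_card_eq hklt
  have hQdisj : (↑Q : Set (Finset (Fin n → ZMod p))).PairwiseDisjoint id := by
    intro t ht t' ht' htne
    simp only [Function.onFun, id]
    rw [Finset.disjoint_left]
    intro u hu hu'
    obtain ⟨_, _, _, heq⟩ := hPst t (hQP ht)
    obtain ⟨_, _, _, heq'⟩ := hPst t' (hQP ht')
    exact htne ((heq u hu).trans (heq' u hu').symm)
  set B := insert y (Q.biUnion id) with hB
  have hynot : y ∉ Q.biUnion id := by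
    intro h
    obtain ⟨t, ht, hyt⟩ := Finset.mem_biUnion.1 h
    obtain ⟨_, hsub, _, _⟩ := hPst t (hQP ht)
    exact absurd (hsub hyt) (by simp)
  have hBA : B ⊆ A := by
    intro u hu
    rcases Finset.mem_insert.1 hu with rfl | hu
    · exact hy
    · obtain ⟨t, ht, hut⟩ := Finset.mem_biUnion.1 hu
      obtain ⟨_, hsub, _, _⟩ := hPst t (hQP ht)
      exact Finset.erase_subset _ _ (hsub hut)
  have hBcard : B.card = p := by
    rw [hB, Finset.card_insert_of_notMem hynot, Finset.card_biUnion hQdisj]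
    have : ∑ t ∈ Q, (id t).card = ∑ t ∈ Q, 2 :=
      Finset.sum_congr rfl (fun t ht => (hPst t (hQP ht)).1)
    rw [this, Finset.sum_const, smul_eq_mul, hQcard]
    omega
  have hBsum : ∑ v ∈ B, v = 0 := by
    rw [hB, Finset.sum_insert hynot, Finset.sum_biUnion hQdisj]
    simp only [id]
    have : ∑ t ∈ Q, ∑ v ∈ t, v = ∑ t ∈ Q, (y + y) :=
      Finset.sum_congr rfl (fun t ht => (hPst t (hQP ht)).2.2.1)
    rw [this, Finset.sum_const, hQcard]
    have hnum : (p - 1) / 2 = k := by omega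
    rw [hnum]
    have h2 : y + k • (y + y) = (2 * k + 1) • y := by
      rw [smul_add, add_nsmul, one_nsmul, two_mul, add_nsmul]
      abel
    rw [h2, ← hk]
    funext i
    simp only [Pi.smul_apply, Pi.zero_apply, nsmul_eq_mul]
    simp [ZMod.natCast_self]
  exact hA ⟨B, hBA, hBcard, hBsum⟩

/-- Let p ≥ 3 be a prime and n ≥ 1. If A ⊆ F_p^n does not contain p distinct elements summing
to zero, then the total number of three-term arithmetic progressions contained in A (i.e.
three-element subsets {x, y, z} of A with x ≠ z and x + z = 2y) is at most ((p-3)/2)·|A|. -/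
theorem stmt5 (p n : ℕ) (hp : p.Prime) (hp3 : 3 ≤ p) (hn : 1 ≤ n)
    (A : Finset (Fin n → ZMod p))
    (hA : ¬ ∃ B ⊆ A, B.card = p ∧ ∑ v ∈ B, v = 0) :
    {s : Finset (Fin n → ZMod p) | s ⊆ A ∧ s.card = 3 ∧
        ∃ x ∈ s, ∃ y ∈ s, ∃ z ∈ s, x ≠ z ∧ x + z = y + y}.ncard
      ≤ (p - 3) / 2 * A.card := by
  classical
  set T := (A.powersetCard 3).filter
    (fun s => ∃ x ∈ s, ∃ y ∈ s, ∃ z ∈ s, x ≠ z ∧ x + z = y + y) with hT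
  have hset : {s : Finset (Fin n → ZMod p) | s ⊆ A ∧ s.card = 3 ∧
      ∃ x ∈ s, ∃ y ∈ s, ∃ z ∈ s, x ≠ z ∧ x + z = y + y} = ↑T := by
    ext s
    simp [hT, Finset.mem_powersetCard, and_assoc]
  rw [hset, Set.ncard_coe_finset]
  have hsub : T ⊆ A.biUnion (fun y => T.filter (fun s => y ∈ s ∧
      ∃ x ∈ s, ∃ z ∈ s, x ≠ z ∧ x + z = y + y)) := by
    intro s hs
    have hs' := hs
    rw [hT, Finset.mem_filter, Finset.mem_powersetCard] at hs'
    obtain ⟨⟨hsA, _⟩, x, hx, y, hy, z, hz, hxz, hsum⟩ := hs'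
    exact Finset.mem_biUnion.2 ⟨y, hsA hy, Finset.mem_filter.2 ⟨hs, hy, x, hx, z, hz, hxz, hsum⟩⟩
  calc T.card ≤ ∑ y ∈ A, (T.filter (fun s => y ∈ s ∧
      ∃ x ∈ s, ∃ z ∈ s, x ≠ z ∧ x + z = y + y)).card :=
        (Finset.card_le_card hsub).trans Finset.card_biUnion_le
    _ ≤ ∑ _y ∈ A, (p - 3) / 2 := by
        apply Finset.sum_le_sum
        intro y hy
        refine le_trans ?_ (pairBound p n hp hp3 A hA y hy)
        apply Finset.card_le_card_of_injOn (fun s => s.erase y)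
        · intro s hs
          rw [Finset.mem_coe, Finset.mem_filter] at hs
          obtain ⟨hsT, hys, x, hx, z, hz, hxz, hsum⟩ := hs
          rw [hT, Finset.mem_filter, Finset.mem_powersetCard] at hsT
          obtain ⟨⟨hsA, hscard⟩, -⟩ := hsT
          have hxy : x ≠ y := by
            rintro rfl
            exact hxz (add_left_cancel hsum).symm
          have hzy : z ≠ y := by
            rintro rfl
            exact hxz (add_right_cancel hsum)
          rw [Finset.mem_coe, Finset.mem_filter, Finset.mem_powersetCard]
          refine ⟨⟨Finset.erase_subset_erase y hsA, ?_⟩,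
            x, Finset.mem_erase.2 ⟨hxy, hx⟩, z, Finset.mem_erase.2 ⟨hzy, hz⟩, hxz, hsum⟩
          rw [Finset.card_erase_of_mem hys, hscard]
        · intro s hs s' hs' h
          have hys : y ∈ s := (Finset.mem_filter.1 hs).2.1
          have hys' : y ∈ s' := (Finset.mem_filter.1 hs').2.1
          have h' : s.erase y = s'.erase y := h
          rw [← Finset.insert_erase hys, h', Finset.insert_erase hys']
    _ = (p - 3) / 2 * A.card := by rw [Finset.sum_const, smul_eq_mul, mul_comm]
end

section
/- Let p be a prime and n ≥ 1 an integer. Then 𝔰(F_p^{n}) ≤ 𝔤(F_p^{n+1}). -/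
lemma exp_pi_zmod (p m : ℕ) (hp : p.Prime) (hm : 1 ≤ m) :
    AddMonoid.exponent (Fin m → ZMod p) = p := by
  haveI : Fact p.Prime := ⟨hp⟩
  apply Nat.dvd_antisymm
  · apply AddMonoid.exponent_dvd_of_forall_nsmul_eq_zero
    intro x
    funext i
    simp [nsmul_eq_mul, ZMod.natCast_self]
  · have h1 : addOrderOf (fun _ : Fin m => (1 : ZMod p)) = p := by
      apply addOrderOf_eq_prime
      · funext i; simp [nsmul_eq_mul, ZMod.natCast_self]
      · intro h
        have := congrFun h ⟨0, hm⟩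
        exact one_ne_zero this
    have := AddMonoid.addOrder_dvd_exponent (fun _ : Fin m => (1 : ZMod p))
    rwa [h1] at this

/-- Let p be a prime and n ≥ 1. Then 𝔰(F_p^n) ≤ 𝔤(F_p^{n+1}). -/
theorem stmt7 (p n : ℕ) (hp : p.Prime) (hn : 1 ≤ n) :
    EGZ (Fin n → ZMod p) ≤ gEGZ (Fin (n + 1) → ZMod p) := by
  haveI : Fact p.Prime := ⟨hp⟩
  have hexpG : AddMonoid.exponent (Fin (n + 1) → ZMod p) = p :=
    exp_pi_zmod p (n + 1) hp (Nat.le_add_left 1 n)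
  have hexpH : AddMonoid.exponent (Fin n → ZMod p) = p := exp_pi_zmod p n hp hn
  -- the defining set of gEGZ is nonempty
  have hne : {a | ∀ A : Finset (Fin (n + 1) → ZMod p), a ≤ A.card →
      ∃ B ⊆ A, B.card = AddMonoid.exponent (Fin (n + 1) → ZMod p) ∧ ∑ x ∈ B, x = 0}.Nonempty := by
    refine ⟨Fintype.card (Fin (n + 1) → ZMod p) + 1, fun A hA => absurd hA ?_⟩
    exact Nat.not_le.mpr (Nat.lt_succ_of_le (Finset.card_le_univ A |>.trans_eq Finset.card_univ))
  have hmem := Nat.sInf_mem hne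
  set a := gEGZ (Fin (n + 1) → ZMod p) with ha
  -- π : projection to the first n coordinates
  let π : (Fin (n + 1) → ZMod p) →+ (Fin n → ZMod p) :=
    AddMonoidHom.mk' (fun w i => w i.castSucc) (fun x y => rfl)
  let σ : (Fin n → ZMod p) → ℕ → (Fin (n + 1) → ZMod p) :=
    fun v j => Fin.snoc v ((j : ℕ) : ZMod p)
  have hπsnoc : ∀ (v : Fin n → ZMod p) (j : ℕ), π (σ v j) = v := by
    intro v j
    funext i
    simp only [σ, π, AddMonoidHom.mk'_apply, Fin.snoc_castSucc]
  -- positivity of a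
  have hapos : 0 < a := by
    rcases Nat.eq_zero_or_pos a with h0 | h
    · exfalso
      obtain ⟨B, hB, hBcard, -⟩ := hmem (∅ : Finset (Fin (n + 1) → ZMod p))
        (h0.le.trans (Nat.zero_le _))
      rw [Finset.subset_empty] at hB
      rw [hB, Finset.card_empty, hexpG] at hBcard
      exact Nat.Prime.ne_zero hp hBcard.symm
    · exact h
  apply Nat.sInf_le
  refine ⟨hapos, fun m hm => ?_⟩
  by_cases hcase : ∃ v, p ≤ m.count v
  · obtain ⟨v, hv⟩ := hcase
    refine ⟨Multiset.replicate p v, ?_, ?_, ?_⟩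
    · rw [Multiset.le_iff_count]
      intro w
      rw [Multiset.count_replicate]
      split
      · next h => exact h ▸ hv
      · exact Nat.zero_le _
    · rw [Multiset.card_replicate, hexpH]
    · rw [Multiset.sum_replicate]
      funext i
      simp [nsmul_eq_mul, ZMod.natCast_self]
  · push_neg at hcase
    classical
    set A : Finset (Fin (n + 1) → ZMod p) :=
      m.toFinset.biUnion
        (fun v => (Finset.range (m.count v)).image (σ v)) with hA
    have hinj : ∀ v : Fin n → ZMod p, Set.InjOn (σ v)
        (Finset.range (m.count v)) := by
      intro v j hj j' hj' hjj'
      simp only [Finset.coe_range, Set.mem_Iio] at hj hj'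
      have hjp : j < p := lt_of_lt_of_le hj (le_of_lt (hcase v))
      have hj'p : j' < p := lt_of_lt_of_le hj' (le_of_lt (hcase v))
      have hlast : ((j : ℕ) : ZMod p) = ((j' : ℕ) : ZMod p) := by
        have := congrFun hjj' (Fin.last n)
        simpa [σ, Fin.snoc_last] using this
      have := congrArg ZMod.val hlast
      rwa [ZMod.val_cast_of_lt hjp, ZMod.val_cast_of_lt hj'p] at this
    -- characterize members of A
    have hAmem : ∀ w ∈ A, w ∈ (Finset.range (m.count (π w))).image
        (σ (π w)) := by
      intro w hw
      rw [hA, Finset.mem_biUnion] at hw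
      obtain ⟨v, hv, hw⟩ := hw
      rw [Finset.mem_image] at hw
      obtain ⟨j, hj, rfl⟩ := hw
      rw [hπsnoc]
      exact Finset.mem_image.mpr ⟨j, hj, rfl⟩
    have hAcard : A.card = a := by
      rw [hA, Finset.card_biUnion]
      · have : ∀ v ∈ m.toFinset,
            ((Finset.range (m.count v)).image (σ v)).card
            = m.count v := by
          intro v hv
          rw [Finset.card_image_of_injOn (hinj v), Finset.card_range]
        rw [Finset.sum_congr rfl this, Multiset.toFinset_sum_count_eq, hm]
      · intro v hv v' hv' hvv'
        rw [Function.onFun, Finset.disjoint_left]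
        intro w hw hw'
        apply hvv'
        rw [Finset.mem_image] at hw hw'
        obtain ⟨j, -, rfl⟩ := hw
        obtain ⟨j', -, h⟩ := hw'
        have := congrArg π h
        rw [hπsnoc, hπsnoc] at this
        exact this.symm
    obtain ⟨B, hBA, hBcard, hBsum⟩ := hmem A (le_of_eq hAcard.symm)
    refine ⟨B.val.map π, ?_, ?_, ?_⟩
    · rw [Multiset.le_iff_count]
      intro v
      rw [Multiset.count_map]
      have h1 : (Multiset.filter (fun w => v = π w) B.val)
          = (B.filter (fun w => v = π w)).val := rfl
      rw [h1]
      have h2 : (B.filter (fun w => v = π w)) ⊆ (A.filter (fun w => v = π w)) :=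
        Finset.filter_subset_filter _ hBA
      have h3 : (A.filter (fun w => v = π w)) ⊆
          (Finset.range (m.count v)).image (σ v) := by
        intro w hw
        rw [Finset.mem_filter] at hw
        obtain ⟨hwA, hwv⟩ := hw
        have := hAmem w hwA
        rwa [← hwv] at this
      calc Multiset.card (B.filter (fun w => v = π w)).val
          = (B.filter (fun w => v = π w)).card := rfl
        _ ≤ ((Finset.range (m.count v)).image (σ v)).card :=
            Finset.card_le_card (h2.trans h3)
        _ ≤ (Finset.range (m.count v)).card := Finset.card_image_le
        _ = m.count v := Finset.card_range _
    · rw [Multiset.card_map, hexpH]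
      rw [hexpG] at hBcard
      exact hBcard
    · have : (B.val.map π).sum = ∑ x ∈ B, π x := rfl
      rw [this, ← map_sum π (fun x => x) B, hBsum, map_zero]
end

section
/- Let p be a prime and let G = (Z/p^{a_1}Z) × ... × (Z/p^{a_n}Z), where a_1 ≥ a_2 ≥ ... ≥ a_n are positive integers. Then 𝔰(G) ≤ ((p^{a_1} - 1)/(p - 1))·𝔰(F_p^{n}), and consequently 𝔰(G) < (exp(G)/(p-1))·𝔰(F_p^{n}). -/
section AuxEGZ

theorem aux_exists_le_card {α : Type*} (m : Multiset α) (k : ℕ) (h : k ≤ Multiset.card m) :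
    ∃ t ≤ m, Multiset.card t = k := by
  induction k with
  | zero => exact ⟨0, zero_le, rfl⟩
  | succ k ih =>
    obtain ⟨t, ht, hc⟩ := ih (le_of_lt h)
    have : t < m := lt_of_le_of_ne ht (by rintro rfl; omega)
    obtain ⟨x, hx⟩ := Multiset.lt_iff_cons_le.mp this
    exact ⟨x ::ₘ t, hx, by simp [hc]⟩

theorem aux_lift_map {α β : Type*} (f : α → β) (m : Multiset α) (t' : Multiset β)
    (h : t' ≤ m.map f) : ∃ t ≤ m, t.map f = t' := by
  classical
  induction m using Multiset.induction_on generalizing t' with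
  | empty => simp_all
  | cons a m ih =>
    rw [Multiset.map_cons] at h
    by_cases hfa : f a ∈ t'
    · obtain ⟨t'', rfl⟩ := Multiset.exists_cons_of_mem hfa
      have h2 : t'' ≤ m.map f := (Multiset.cons_le_cons_iff (f a)).mp h
      obtain ⟨t, ht, rfl⟩ := ih _ h2
      exact ⟨a ::ₘ t, Multiset.cons_le_cons a ht, by simp⟩
    · have h2 : t' ≤ m.map f := by
        rw [Multiset.le_iff_count] at h ⊢
        intro b
        have hb2 := h b
        rcases eq_or_ne b (f a) with hb | hb
        · subst hb
          simp [Multiset.count_eq_zero_of_notMem hfa]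
        · simp only [Multiset.count_cons, hb, if_neg hb] at hb2
          simpa using hb2
      obtain ⟨t, ht, rfl⟩ := ih _ h2
      exact ⟨t, le_trans ht (Multiset.le_cons_self m a), rfl⟩

theorem aux_EGZset_nonempty (G : Type*) [AddCommGroup G] [Fintype G] :
    ∃ s, 0 < s ∧ ∀ m : Multiset G, Multiset.card m = s →
      ∃ t ≤ m, Multiset.card t = AddMonoid.exponent G ∧ t.sum = 0 := by
  classical
  set e := AddMonoid.exponent G with hedef
  refine ⟨Fintype.card G * e + 1, Nat.succ_pos _, fun m hm => ?_⟩
  have : ∃ g : G, e ≤ m.count g := by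
    by_contra hcon
    push_neg at hcon
    have hsum : ∑ g : G, m.count g = Multiset.card m := by
      simp [Multiset.sum_count_eq_card]
    have hle : ∑ g : G, m.count g ≤ ∑ _g : G, (e - 1) :=
      Finset.sum_le_sum fun g _ => by have := hcon g; omega
    simp only [Finset.sum_const, Finset.card_univ, smul_eq_mul] at hle
    have : Fintype.card G * (e - 1) ≤ Fintype.card G * e := Nat.mul_le_mul_left _ (by omega)
    omega
  obtain ⟨g, hg⟩ := this
  refine ⟨Multiset.replicate e g, Multiset.le_count_iff_replicate_le.mp hg, by simp, ?_⟩
  rw [Multiset.sum_replicate]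
  exact AddMonoid.exponent_nsmul_eq_zero g

theorem aux_zmod_lift (p k : ℕ) [NeZero p] (hk : k ≠ 0) (x : ZMod (p ^ k))
    (h : ZMod.castHom (dvd_pow_self p hk) (ZMod p) x = 0) : ∃ y, x = p • y := by
  haveI : NeZero (p ^ k) := ⟨pow_ne_zero k (NeZero.ne p)⟩
  have hx : ((x.val : ℕ) : ZMod p) = 0 := by
    rw [ZMod.castHom_apply] at h
    rwa [ZMod.cast_eq_val] at h
  have hdvd : p ∣ x.val := (ZMod.natCast_eq_zero_iff _ _).mp hx
  refine ⟨((x.val / p : ℕ) : ZMod (p ^ k)), ?_⟩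
  rw [nsmul_eq_mul]
  rw [← Nat.cast_mul, Nat.mul_div_cancel' hdvd, ZMod.natCast_val, ZMod.cast_id]

theorem aux_geom (p k : ℕ) (hp : 2 ≤ p) :
    (∑ i ∈ Finset.range k, p ^ i) * (p - 1) = p ^ k - 1 := by
  induction k with
  | zero => simp
  | succ k ih =>
    rw [Finset.sum_range_succ, add_mul, ih, Nat.mul_sub, mul_one, pow_succ]
    have h1 : 1 ≤ p ^ k := Nat.one_le_pow _ _ (by omega)
    have h2 : p ^ k ≤ p ^ k * p := Nat.le_mul_of_pos_right _ (by omega)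
    omega

-- multiset of multisets: card of sum, sum of sum, mono
theorem aux_card_sum {α : Type*} (M : Multiset (Multiset α)) :
    Multiset.card M.sum = (M.map Multiset.card).sum := by
  induction M using Multiset.induction_on with
  | empty => simp
  | cons a M ih => simp [ih]

theorem aux_sum_sum {α : Type*} [AddCommMonoid α] (M : Multiset (Multiset α)) :
    M.sum.sum = (M.map Multiset.sum).sum := by
  induction M using Multiset.induction_on with
  | empty => simp
  | cons a M ih => simp [ih]

theorem aux_sum_mono {α : Type*} (M N : Multiset (Multiset α)) (h : M ≤ N) :
    M.sum ≤ N.sum := by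
  obtain ⟨d, rfl⟩ := Multiset.le_iff_exists_add.mp h
  rw [Multiset.sum_add]
  exact Multiset.le_add_right _ _

theorem aux_sum_map_nsmul {α β : Type*} [AddCommMonoid β] (M : Multiset α) (f : α → β) (c : ℕ) :
    (M.map fun x => c • f x).sum = c • (M.map f).sum := by
  induction M using Multiset.induction_on with
  | empty => simp
  | cons a M ih => simp [ih, smul_add]

end AuxEGZ

/-- **Lemma.** Let p be a prime and G = (ℤ/p^{a_1}ℤ) × ... × (ℤ/p^{a_n}ℤ) where
a_1 ≥ a_2 ≥ ... ≥ a_n are positive integers. Then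
𝔰(G) ≤ ((p^{a_1} - 1)/(p - 1))·𝔰(F_p^n) (an exact natural-number quotient), and consequently
𝔰(G) < (exp(G)/(p-1))·𝔰(F_p^n). -/
theorem stmt9 (p : ℕ) (hp : p.Prime) (n : ℕ) (hn : 0 < n) (a : Fin n → ℕ)
    (ha : ∀ i, 0 < a i) (hmono : Antitone a) :
    EGZ (∀ i, ZMod (p ^ a i)) ≤ (p ^ a ⟨0, hn⟩ - 1) / (p - 1) * EGZ (Fin n → ZMod p) ∧
    (EGZ (∀ i, ZMod (p ^ a i)) : ℝ) <
      (AddMonoid.exponent (∀ i, ZMod (p ^ a i)) : ℝ) / (p - 1) * EGZ (Fin n → ZMod p) := by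
  classical
  have hp2 : 2 ≤ p := hp.two_le
  haveI : NeZero p := ⟨by omega⟩
  set a0 : Fin n := ⟨0, hn⟩ with ha0
  -- exponent computations
  have hexpG : AddMonoid.exponent (∀ i, ZMod (p ^ a i)) = p ^ a a0 := by
    rw [AddMonoid.exponent_pi]
    apply Nat.dvd_antisymm
    · exact Finset.lcm_dvd fun i _ => by
        rw [ZMod.exponent]
        exact pow_dvd_pow p (hmono (Fin.le_def.mpr (Nat.zero_le _)))
    · have := Finset.dvd_lcm (s := (Finset.univ : Finset (Fin n)))
        (f := fun i => AddMonoid.exponent (ZMod (p ^ a i))) (Finset.mem_univ a0)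
      simpa only [ZMod.exponent] using this
  have hexpH : AddMonoid.exponent (Fin n → ZMod p) = p := by
    rw [AddMonoid.exponent_pi]
    apply Nat.dvd_antisymm
    · exact Finset.lcm_dvd fun i _ => by rw [ZMod.exponent]
    · have := Finset.dvd_lcm (s := (Finset.univ : Finset (Fin n)))
        (f := fun _ : Fin n => AddMonoid.exponent (ZMod p)) (Finset.mem_univ a0)
      simpa only [ZMod.exponent] using this
  -- EGZ of F_p^n
  set s := EGZ (Fin n → ZMod p) with hsdef
  have hsmem : 0 < s ∧ ∀ m : Multiset (Fin n → ZMod p), Multiset.card m = s →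
      ∃ t ≤ m, Multiset.card t = AddMonoid.exponent (Fin n → ZMod p) ∧ t.sum = 0 := by
    rw [hsdef, EGZ]
    exact Nat.sInf_mem (aux_EGZset_nonempty _)
  have hspos : 0 < s := hsmem.1
  -- the reduction map
  set f : (∀ i, ZMod (p ^ a i)) → (Fin n → ZMod p) :=
    fun x i => ZMod.castHom (dvd_pow_self p (ha i).ne') (ZMod p) (x i) with hfdef
  have hfsum : ∀ t : Multiset (∀ i, ZMod (p ^ a i)), (t.map f).sum = f t.sum := by
    intro t
    induction t using Multiset.induction_on with
    | empty => funext i; simp [hfdef]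
    | cons x t ih =>
      rw [Multiset.map_cons, Multiset.sum_cons, Multiset.sum_cons, ih]
      funext i
      simp only [hfdef, Pi.add_apply, map_add]
  have hlift : ∀ x : (∀ i, ZMod (p ^ a i)), f x = 0 → ∃ g, x = p • g := by
    intro x hx
    have hcomp : ∀ i, ∃ y, x i = p • y := fun i =>
      aux_zmod_lift p (a i) (ha i).ne' (x i) (congr_fun hx i)
    refine ⟨fun i => (hcomp i).choose, funext fun i => ?_⟩
    simpa using (hcomp i).choose_spec
  -- single extraction
  have hE : ∀ W : Multiset (∀ i, ZMod (p ^ a i)), s ≤ Multiset.card W →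
      ∃ t ≤ W, Multiset.card t = p ∧ ∃ g, t.sum = p • g := by
    intro W hW
    obtain ⟨u, hu, huc⟩ := aux_exists_le_card W s hW
    obtain ⟨t', ht'le, ht'c, ht's⟩ := hsmem.2 (u.map f) (by simp [huc])
    obtain ⟨t, htu, rfl⟩ := aux_lift_map f u t' ht'le
    rw [hexpH] at ht'c
    refine ⟨t, le_trans htu hu, by simpa using ht'c, ?_⟩
    have h0 : f t.sum = 0 := by rw [← hfsum]; exact ht's
    obtain ⟨g, hg⟩ := hlift _ h0
    exact ⟨g, by rw [hg]⟩
  -- bulk extraction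
  have hB : ∀ c : ℕ, ∀ W : Multiset (∀ i, ZMod (p ^ a i)), s + p * c ≤ Multiset.card W →
      ∃ L : Multiset ((∀ i, ZMod (p ^ a i)) × Multiset (∀ i, ZMod (p ^ a i))),
        Multiset.card L = c ∧ (L.map Prod.snd).sum ≤ W ∧
        ∀ b ∈ L, Multiset.card b.2 = p ∧ b.2.sum = p • b.1 := by
    intro c
    induction c with
    | zero => intro W _; exact ⟨0, rfl, by simp, by simp⟩
    | succ c ih =>
      intro W hW
      have hsW : s ≤ Multiset.card W := le_trans (Nat.le_add_right _ _) hW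
      obtain ⟨t, htW, htc, g, hg⟩ := hE W hsW
      have hcard : s + p * c ≤ Multiset.card (W - t) := by
        rw [Multiset.card_sub htW, htc]
        have : p * (c + 1) = p * c + p := by ring
        omega
      obtain ⟨L, hLc, hLle, hLprop⟩ := ih (W - t) hcard
      refine ⟨(g, t) ::ₘ L, by simp [hLc], ?_, ?_⟩
      · rw [Multiset.map_cons, Multiset.sum_cons]
        calc t + (Multiset.map Prod.snd L).sum ≤ t + (W - t) := by
              exact add_le_add_right hLle t
          _ = W := by rw [add_comm]; exact tsub_add_cancel_of_le htW
      · intro b hb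
        rcases Multiset.mem_cons.mp hb with hb | hb
        · subst hb; exact ⟨htc, hg⟩
        · exact hLprop b hb
  -- main induction on e
  have hmain : ∀ e : ℕ, 1 ≤ e → ∀ W : Multiset (∀ i, ZMod (p ^ a i)),
      Multiset.card W = s * ∑ i ∈ Finset.range e, p ^ i →
      ∃ t ≤ W, Multiset.card t = p ^ e ∧ ∃ g, t.sum = p ^ e • g := by
    intro e
    induction e with
    | zero => omega
    | succ e ih =>
      intro _ W hW
      rcases Nat.eq_zero_or_pos e with rfl | he
      · obtain ⟨t, htW, htc, g, hg⟩ := hE W (by rw [hW]; simp)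
        exact ⟨t, htW, by simpa using htc, g, by simpa using hg⟩
      · have hcard : Multiset.card W = s + p * (s * ∑ i ∈ Finset.range e, p ^ i) := by
          rw [hW, geom_sum_succ]
          ring
        obtain ⟨L, hLc, hLle, hLprop⟩ := hB (s * ∑ i ∈ Finset.range e, p ^ i) W
          (le_of_eq hcard.symm)
        obtain ⟨t', ht'le, ht'c, h, hh⟩ := ih he (L.map Prod.fst) (by simp [hLc])
        obtain ⟨M, hML, hMmap⟩ := aux_lift_map Prod.fst L t' ht'le
        have hMmem : ∀ b ∈ M, Multiset.card b.2 = p ∧ b.2.sum = p • b.1 :=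
          fun b hb => hLprop b (Multiset.mem_of_le hML hb)
        refine ⟨(M.map Prod.snd).sum, ?_, ?_, h, ?_⟩
        · exact le_trans (aux_sum_mono _ _ (Multiset.map_le_map hML)) hLle
        · rw [aux_card_sum, Multiset.map_map]
          have : Multiset.map (Multiset.card ∘ Prod.snd) M =
              Multiset.map (fun _ => p) M := by
            apply Multiset.map_congr rfl
            intro b hb
            exact (hMmem b hb).1
          rw [this, Multiset.map_const', Multiset.sum_replicate]
          have hcM : Multiset.card M = p ^ e := by
            rw [← ht'c, ← hMmap, Multiset.card_map]
          rw [hcM, smul_eq_mul, pow_succ, mul_comm]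
        · rw [aux_sum_sum, Multiset.map_map]
          have : Multiset.map (Multiset.sum ∘ Prod.snd) M =
              Multiset.map (fun b => p • (Prod.fst b)) M := by
            apply Multiset.map_congr rfl
            intro b hb
            exact (hMmem b hb).2
          rw [this, aux_sum_map_nsmul, hMmap, hh, smul_smul, ← pow_succ']
  -- assemble part 1
  have hQ : (p ^ a a0 - 1) / (p - 1) = ∑ i ∈ Finset.range (a a0), p ^ i := by
    apply Nat.div_eq_of_eq_mul_left (by omega)
    exact (aux_geom p (a a0) hp2).symm
  have hQpos : 0 < ∑ i ∈ Finset.range (a a0), p ^ i := by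
    apply Finset.sum_pos
    · intro i _; exact Nat.pow_pos (by omega)
    · exact Finset.nonempty_range_iff.mpr (ha a0).ne'
  have hmem : ((p ^ a a0 - 1) / (p - 1) * s) ∈ {s' | 0 < s' ∧
      ∀ m : Multiset (∀ i, ZMod (p ^ a i)), Multiset.card m = s' →
        ∃ t ≤ m, Multiset.card t = AddMonoid.exponent (∀ i, ZMod (p ^ a i)) ∧ t.sum = 0} := by
    constructor
    · rw [hQ]; exact Nat.mul_pos hQpos hspos
    · intro m hm
      obtain ⟨t, htm, htc, g, hg⟩ := hmain (a a0) (ha a0) m (by rw [hm, hQ]; ring)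
      refine ⟨t, htm, by rw [hexpG]; exact htc, ?_⟩
      rw [hg, ← hexpG]
      exact AddMonoid.exponent_nsmul_eq_zero g
  have h1 : EGZ (∀ i, ZMod (p ^ a i)) ≤ (p ^ a a0 - 1) / (p - 1) * s := Nat.sInf_le hmem
  refine ⟨h1, ?_⟩
  -- part 2
  have hd : (0 : ℝ) < (p : ℝ) - 1 := by
    have : (1 : ℝ) < (p : ℝ) := by exact_mod_cast hp.one_lt
    linarith
  have hQcast : ((∑ i ∈ Finset.range (a a0), p ^ i : ℕ) : ℝ) =
      ((p : ℝ) ^ a a0 - 1) / ((p : ℝ) - 1) := by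
    rw [eq_div_iff hd.ne']
    have h := congrArg (Nat.cast : ℕ → ℝ) (aux_geom p (a a0) hp2)
    push_cast [Nat.cast_sub (show 1 ≤ p by omega),
      Nat.cast_sub (Nat.one_le_pow (a a0) p (by omega))] at h
    push_cast
    exact h
  have hcast : ((p ^ a a0 - 1) / (p - 1) * s : ℕ) = (((p : ℝ) ^ a a0 - 1) / ((p : ℝ) - 1)) * s := by
    rw [hQ, Nat.cast_mul, hQcast]
  have hple : (1 : ℝ) ≤ (p : ℝ) ^ a a0 := by
    have : (1 : ℕ) ≤ p ^ a a0 := Nat.one_le_pow _ _ (by omega)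
    exact_mod_cast this
  have hlt : (((p : ℝ) ^ a a0 - 1) / ((p : ℝ) - 1)) * s <
      ((p : ℝ) ^ a a0 / ((p : ℝ) - 1)) * s := by
    apply mul_lt_mul_of_pos_right _ (by exact_mod_cast hspos)
    rw [div_lt_div_iff₀ hd hd]
    exact mul_lt_mul_of_pos_right (by linarith) hd
  calc (EGZ (∀ i, ZMod (p ^ a i)) : ℝ) ≤ ((p ^ a a0 - 1) / (p - 1) * s : ℕ) := by
        exact_mod_cast h1
    _ = (((p : ℝ) ^ a a0 - 1) / ((p : ℝ) - 1)) * s := hcast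
    _ < ((p : ℝ) ^ a a0 / ((p : ℝ) - 1)) * s := hlt
    _ = (AddMonoid.exponent (∀ i, ZMod (p ^ a i)) : ℝ) / ((p : ℝ) - 1) * s := by
        rw [hexpG]; push_cast; ring
end

section
/- Let p be a prime and let G = (Z/p^{a_1}Z) × ... × (Z/p^{a_n}Z), where a_1 ≥ a_2 ≥ ... ≥ a_n are positive integers. For j = 1, ..., a_1 let b_j = max{ i : a_i ≥ j }. Then 𝔰(G) ≤ Σ_{j=1}^{a_1} p^{j-1}·𝔰(F_p^{b_j}). -/
open Multiset

lemma exists_le_map' {α β : Type*} (f : α → β) :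
    ∀ (s : Multiset α) (t : Multiset β), t ≤ s.map f → ∃ u ≤ s, u.map f = t := by
  classical
  intro s
  induction s using Multiset.induction with
  | empty =>
    intro t ht
    simp only [Multiset.map_zero, Multiset.le_zero] at ht
    exact ⟨0, le_refl _, by simp [ht]⟩
  | cons x s ih =>
    intro t ht
    rw [Multiset.map_cons] at ht
    by_cases hx : f x ∈ t
    · have h1 : t.erase (f x) ≤ s.map f := by
        have := Multiset.erase_le_erase (f x) ht
        rwa [Multiset.erase_cons_head] at this
      obtain ⟨u, hu, hum⟩ := ih _ h1
      refine ⟨x ::ₘ u, Multiset.cons_le_cons _ hu, ?_⟩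
      rw [Multiset.map_cons, hum, Multiset.cons_erase hx]
    · have h1 : t ≤ s.map f := by
        have hcnt := Multiset.le_iff_count.mp ht
        rw [Multiset.le_iff_count]
        intro b
        have := hcnt b
        rcases eq_or_ne b (f x) with rfl | hb
        · rw [Multiset.count_eq_zero_of_notMem hx]; exact Nat.zero_le _
        · rwa [Multiset.count_cons_of_ne hb] at this
      obtain ⟨u, hu, hum⟩ := ih _ h1
      exact ⟨u, le_trans hu (Multiset.le_cons_self _ _), hum⟩

lemma exists_le_card' {α : Type*} :
    ∀ (s : Multiset α) (k : ℕ), k ≤ Multiset.card s → ∃ t ≤ s, Multiset.card t = k := by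
  intro s
  induction s using Multiset.induction with
  | empty => intro k hk; simp at hk; exact ⟨0, le_refl _, by simp [hk]⟩
  | cons x s ih =>
    intro k hk
    by_cases h : k ≤ Multiset.card s
    · obtain ⟨t, ht, htc⟩ := ih k h
      exact ⟨t, le_trans ht (Multiset.le_cons_self _ _), htc⟩
    · have : k = Multiset.card s + 1 := by simp at hk; omega
      exact ⟨x ::ₘ s, le_refl _, by simp [this]⟩

lemma card_msum {α : Type*} (S : Multiset (Multiset α)) :
    Multiset.card S.sum = (S.map Multiset.card).sum := by
  induction S using Multiset.induction with
  | empty => simp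
  | cons x S ih => simp [ih]

lemma sum_msum {α : Type*} [AddCommMonoid α] (S : Multiset (Multiset α)) :
    S.sum.sum = (S.map Multiset.sum).sum := by
  induction S using Multiset.induction with
  | empty => simp
  | cons x S ih => simp [ih]

lemma msum_mono {α : Type*} {s t : Multiset (Multiset α)} (h : s ≤ t) : s.sum ≤ t.sum := by
  obtain ⟨u, rfl⟩ := Multiset.le_iff_exists_add.mp h
  rw [Multiset.sum_add]
  exact Multiset.le_add_right _ _

lemma egz_spec (H : Type*) [AddCommGroup H] [Fintype H] :
    0 < EGZ H ∧ ∀ m : Multiset H, Multiset.card m = EGZ H →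
      ∃ t ≤ m, Multiset.card t = AddMonoid.exponent H ∧ t.sum = 0 := by
  classical
  have hexp : 0 < AddMonoid.exponent H := AddMonoid.ExponentExists.of_finite.exponent_pos
  have hcard : 0 < Fintype.card H := Fintype.card_pos
  have hne : {s | 0 < s ∧ ∀ m : Multiset H, Multiset.card m = s →
      ∃ t ≤ m, Multiset.card t = AddMonoid.exponent H ∧ t.sum = 0}.Nonempty := by
    refine ⟨AddMonoid.exponent H * Fintype.card H, Nat.mul_pos hexp hcard, ?_⟩
    intro m hm
    have hx : ∃ x : H, AddMonoid.exponent H ≤ m.count x := by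
      by_contra hcon
      push_neg at hcon
      have h1 : Multiset.card m ≤ (AddMonoid.exponent H - 1) * Fintype.card H := by
        calc Multiset.card m = ∑ x ∈ m.toFinset, m.count x :=
              (Multiset.toFinset_sum_count_eq m).symm
          _ ≤ ∑ _x ∈ m.toFinset, (AddMonoid.exponent H - 1) :=
              Finset.sum_le_sum (fun x _ => by have := hcon x; omega)
          _ = m.toFinset.card * (AddMonoid.exponent H - 1) := by
              rw [Finset.sum_const, smul_eq_mul]
          _ ≤ Fintype.card H * (AddMonoid.exponent H - 1) :=
              Nat.mul_le_mul_right _ (Finset.card_le_univ _)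
          _ = (AddMonoid.exponent H - 1) * Fintype.card H := mul_comm _ _
      rw [hm] at h1
      have h2 : AddMonoid.exponent H ≤ AddMonoid.exponent H - 1 :=
        Nat.le_of_mul_le_mul_right h1 hcard
      omega
    obtain ⟨x, hx⟩ := hx
    refine ⟨Multiset.replicate (AddMonoid.exponent H) x, ?_, Multiset.card_replicate _ _, ?_⟩
    · rw [Multiset.le_iff_count]
      intro y
      rw [Multiset.count_replicate]
      split_ifs with h
      · subst h; exact hx
      · exact Nat.zero_le _
    · rw [Multiset.sum_replicate]
      exact AddMonoid.exponent_nsmul_eq_zero x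
  have : EGZ H ∈ {s | 0 < s ∧ ∀ m : Multiset H, Multiset.card m = s →
      ∃ t ≤ m, Multiset.card t = AddMonoid.exponent H ∧ t.sum = 0} := by
    rw [EGZ]; exact Nat.sInf_mem hne
  exact this

lemma egz_le (H : Type*) [AddCommGroup H] (s : ℕ) (hs : 0 < s)
    (h : ∀ m : Multiset H, Multiset.card m = s →
      ∃ t ≤ m, Multiset.card t = AddMonoid.exponent H ∧ t.sum = 0) : EGZ H ≤ s :=
  Nat.sInf_le ⟨hs, h⟩

lemma exp_F {p : ℕ} (hp : p.Prime) (m : ℕ) (hm : 0 < m) :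
    AddMonoid.exponent (Fin m → ZMod p) = p := by
  haveI : NeZero p := ⟨hp.pos.ne'⟩
  apply Nat.dvd_antisymm
  · apply AddMonoid.exponent_dvd_of_forall_nsmul_eq_zero
    intro f
    funext k
    simp only [Pi.smul_apply, Pi.zero_apply, nsmul_eq_mul, ZMod.natCast_self, zero_mul]
  · have h := AddMonoidHom.exponent_dvd
      (f := Pi.evalAddMonoidHom (fun _ : Fin m => ZMod p) ⟨0, hm⟩)
      (Function.surjective_eval _)
    rwa [ZMod.exponent] at h

lemma pow_smul_zmod_zero {p : ℕ} {m k : ℕ} (h : m ≤ k) (x : ZMod (p ^ m)) :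
    p ^ k • x = 0 := by
  rw [nsmul_eq_mul]
  have : ((p ^ k : ℕ) : ZMod (p ^ m)) = 0 :=
    (ZMod.natCast_eq_zero_iff _ _).mpr (pow_dvd_pow p h)
  rw [this, zero_mul]

lemma p_dvd_of_cast_val {p : ℕ} (hp : p.Prime) {m : ℕ} (x : ZMod (p ^ m))
    (hx : ((x.val : ℕ) : ZMod p) = 0) : ∃ w : ZMod (p ^ m), x = p • w := by
  haveI : NeZero p := ⟨hp.pos.ne'⟩
  haveI : NeZero (p ^ m) := ⟨(pow_pos hp.pos m).ne'⟩
  obtain ⟨c, hc⟩ := (ZMod.natCast_eq_zero_iff _ _).mp hx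
  refine ⟨(c : ZMod (p ^ m)), ?_⟩
  rw [nsmul_eq_mul, ← Nat.cast_mul, ← hc, ZMod.natCast_zmod_val]

section

variable {n : ℕ} (p : ℕ) (a : Fin n → ℕ)

/-- index map from `Fin b_j` into `Fin n`. -/
noncomputable def idx (j : ℕ) (k : Fin ((Finset.univ.filter fun i => j ≤ a i).card)) : Fin n :=
  ((Finset.univ.filter fun i => j ≤ a i).equivFin.symm k).1

lemma idx_prop (j : ℕ) (k : Fin ((Finset.univ.filter fun i => j ≤ a i).card)) :
    j ≤ a (idx a j k) :=
  (Finset.mem_filter.mp ((Finset.univ.filter fun i => j ≤ a i).equivFin.symm k).2).2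

lemma idx_surj (j : ℕ) (i : Fin n) (hij : j ≤ a i) : ∃ k, idx a j k = i := by
  have mem : i ∈ Finset.univ.filter (fun i => j ≤ a i) :=
    Finset.mem_filter.mpr ⟨Finset.mem_univ _, hij⟩
  refine ⟨(Finset.univ.filter fun i => j ≤ a i).equivFin ⟨i, mem⟩, ?_⟩
  rw [idx, Equiv.symm_apply_apply]

noncomputable def psi (ha : ∀ i, 0 < a i) (j : ℕ) :
    (∀ i, ZMod (p ^ a i)) →+ (Fin ((Finset.univ.filter fun i => j ≤ a i).card) → ZMod p) :=
  AddMonoidHom.mk'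
    (fun y k => ZMod.castHom (dvd_pow_self p (ha (idx a j k)).ne') (ZMod p) (y (idx a j k)))
    (fun x y => by
      funext k
      exact map_add (ZMod.castHom (dvd_pow_self p (ha (idx a j k)).ne') (ZMod p)) _ _)

lemma psi_coord (hp : p.Prime) (ha : ∀ i, 0 < a i) (j : ℕ) (v : ∀ i, ZMod (p ^ a i))
    (hv : psi p a ha j v = 0) (i : Fin n) (hij : j ≤ a i) :
    ((v i).val : ZMod p) = 0 := by
  obtain ⟨k, hk⟩ := idx_surj a j i hij
  have h := congrFun hv k
  have h2 : psi p a ha j v k =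
      ZMod.castHom (dvd_pow_self p (ha (idx a j k)).ne') (ZMod p) (v (idx a j k)) := rfl
  rw [h2, Pi.zero_apply, ZMod.castHom_apply] at h
  haveI : NeZero (p ^ a (idx a j k)) := ⟨(pow_pos hp.pos _).ne'⟩
  rw [← ZMod.natCast_val] at h
  have h3 : (((v (idx a j k)).val : ℕ) : ZMod p) = 0 := h
  rw [hk] at h3
  exact h3

lemma divstep (hp : p.Prime) (ha : ∀ i, 0 < a i) (t : ℕ) (v : ∀ i, ZMod (p ^ a i))
    (hv : psi p a ha (t + 1) v = 0) : ∃ z, p ^ t • v = p ^ (t + 1) • z := by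
  classical
  have key : ∀ i : Fin n, ∃ w : ZMod (p ^ a i), p ^ t • (v i) = p ^ (t + 1) • w := by
    intro i
    by_cases h : t + 1 ≤ a i
    · obtain ⟨w, hw⟩ := p_dvd_of_cast_val hp (v i) (psi_coord p a hp ha (t + 1) v hv i h)
      refine ⟨w, ?_⟩
      rw [hw, smul_smul, ← pow_succ]
    · exact ⟨0, by rw [pow_smul_zmod_zero (by omega) (v i), smul_zero]⟩
  choose z hz using key
  refine ⟨z, ?_⟩
  funext i
  simpa using hz i

lemma extract (hp : p.Prime) (ha : ∀ i, 0 < a i) (hn : 0 < n) (t : ℕ)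
    (hte : t + 1 ≤ a ⟨0, hn⟩)
    (M : Multiset (Multiset (∀ i, ZMod (p ^ a i)) × (∀ i, ZMod (p ^ a i))))
    (hM : ∀ q ∈ M, Multiset.card q.1 = p ^ t ∧ q.1.sum = p ^ t • q.2)
    (hc : Multiset.card M =
      EGZ (Fin ((Finset.univ.filter fun i => (t + 1) ≤ a i).card) → ZMod p)) :
    ∃ M₀ ≤ M, Multiset.card M₀ = p ∧ ∃ z,
      Multiset.card ((M₀.map Prod.fst).sum) = p ^ (t + 1) ∧
      ((M₀.map Prod.fst).sum).sum = p ^ (t + 1) • z := by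
  classical
  haveI : NeZero p := ⟨hp.pos.ne'⟩
  have hb : 0 < ((Finset.univ.filter fun i => (t + 1) ≤ a i).card) :=
    Finset.card_pos.mpr ⟨⟨0, hn⟩, Finset.mem_filter.mpr ⟨Finset.mem_univ _, hte⟩⟩
  have hexp := exp_F hp _ hb
  obtain ⟨_, hprop⟩ := egz_spec
    (Fin ((Finset.univ.filter fun i => (t + 1) ≤ a i).card) → ZMod p)
  obtain ⟨u, hu, hcu, hsu⟩ := hprop (M.map fun q => psi p a ha (t + 1) q.2)
    (by rw [Multiset.card_map, hc])
  obtain ⟨M₀, hM₀, hmap⟩ := exists_le_map' _ _ _ hu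
  have hcM₀ : Multiset.card M₀ = p := by
    calc Multiset.card M₀ = Multiset.card u := by rw [← hmap, Multiset.card_map]
      _ = p := by rw [hcu, hexp]
  have hpsi : psi p a ha (t + 1) ((M₀.map Prod.snd).sum) = 0 := by
    rw [map_multiset_sum, Multiset.map_map]
    show (M₀.map fun q => psi p a ha (t + 1) q.2).sum = 0
    rw [hmap]; exact hsu
  obtain ⟨z, hz⟩ := divstep p a hp ha t _ hpsi
  refine ⟨M₀, hM₀, hcM₀, z, ?_, ?_⟩
  · rw [card_msum, Multiset.map_map]
    have h1 : M₀.map (Multiset.card ∘ Prod.fst) = M₀.map (fun _ => p ^ t) :=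
      Multiset.map_congr rfl (fun q hq => (hM q (Multiset.mem_of_le hM₀ hq)).1)
    rw [h1, Multiset.map_const', hcM₀, Multiset.sum_replicate, smul_eq_mul, ← pow_succ']
  · rw [sum_msum, Multiset.map_map]
    have h1 : M₀.map (Multiset.sum ∘ Prod.fst) = M₀.map (fun q => p ^ t • q.2) :=
      Multiset.map_congr rfl (fun q hq => (hM q (Multiset.mem_of_le hM₀ hq)).2)
    have h2 : (M₀.map fun q => p ^ t • q.2).sum = p ^ t • (M₀.map Prod.snd).sum := by
      rw [Multiset.smul_sum, Multiset.map_map]; rfl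
    rw [h1, h2, hz]

end

section
variable {n : ℕ} (p : ℕ) (a : Fin n → ℕ)

lemma harvest (hp : p.Prime) (ha : ∀ i, 0 < a i) (hn : 0 < n) (t : ℕ)
    (hte : t + 1 ≤ a ⟨0, hn⟩) :
    ∀ (c : ℕ) (M : Multiset (Multiset (∀ i, ZMod (p ^ a i)) × (∀ i, ZMod (p ^ a i)))),
      (∀ q ∈ M, Multiset.card q.1 = p ^ t ∧ q.1.sum = p ^ t • q.2) →
      Multiset.card M =
        EGZ (Fin ((Finset.univ.filter fun i => (t + 1) ≤ a i).card) → ZMod p) + p * c →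
      ∃ M' : Multiset (Multiset (∀ i, ZMod (p ^ a i)) × (∀ i, ZMod (p ^ a i))),
        Multiset.card M' = c ∧
        (∀ q ∈ M', Multiset.card q.1 = p ^ (t + 1) ∧ q.1.sum = p ^ (t + 1) • q.2) ∧
        (M'.map Prod.fst).sum ≤ (M.map Prod.fst).sum := by
  intro c
  induction c with
  | zero =>
    intro M hM hc
    exact ⟨0, by simp, by simp, by simp⟩
  | succ c ih =>
    intro M hM hc
    obtain ⟨Msub, hMsub, hcsub⟩ := exists_le_card' M
      (EGZ (Fin ((Finset.univ.filter fun i => (t + 1) ≤ a i).card) → ZMod p))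
      (by rw [hc]; exact Nat.le_add_right _ _)
    obtain ⟨M₀, hM₀sub, hcM₀, z, hcard0, hsum0⟩ := extract p a hp ha hn t hte Msub
      (fun q hq => hM q (Multiset.mem_of_le hMsub hq)) hcsub
    have hM₀ : M₀ ≤ M := le_trans hM₀sub hMsub
    obtain ⟨M', hc', hblk', hle'⟩ := ih (M - M₀)
      (fun q hq => hM q (Multiset.mem_of_le (Multiset.sub_le_self _ _) hq))
      (by rw [Multiset.card_sub hM₀, hc, hcM₀, Nat.mul_succ]; omega)
    refine ⟨((M₀.map Prod.fst).sum, z) ::ₘ M', by simp [hc'], ?_, ?_⟩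
    · intro q hq
      rcases Multiset.mem_cons.mp hq with rfl | h
      · exact ⟨hcard0, hsum0⟩
      · exact hblk' q h
    · rw [Multiset.map_cons, Multiset.sum_cons]
      calc (M₀.map Prod.fst).sum + (M'.map Prod.fst).sum
          ≤ (M₀.map Prod.fst).sum + ((M - M₀).map Prod.fst).sum := by
            exact add_le_add_right hle' _
        _ = (M.map Prod.fst).sum := by
            rw [← Multiset.sum_add, ← Multiset.map_add, add_tsub_cancel_of_le hM₀]

lemma engine (hp : p.Prime) (ha : ∀ i, 0 < a i) (hn : 0 < n) :
    ∀ (d t : ℕ), (t + 1) + d = a ⟨0, hn⟩ →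
    ∀ (M : Multiset (Multiset (∀ i, ZMod (p ^ a i)) × (∀ i, ZMod (p ^ a i)))),
      (∀ q ∈ M, Multiset.card q.1 = p ^ t ∧ q.1.sum = p ^ t • q.2) →
      Multiset.card M = ∑ k ∈ Finset.Icc (t + 1) (a ⟨0, hn⟩),
        p ^ (k - (t + 1)) * EGZ (Fin ((Finset.univ.filter fun i => k ≤ a i).card) → ZMod p) →
      ∃ T ≤ (M.map Prod.fst).sum, Multiset.card T = p ^ (a ⟨0, hn⟩) ∧
        ∃ z, T.sum = p ^ (a ⟨0, hn⟩) • z := by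
  intro d
  induction d with
  | zero =>
    intro t hte M hM hc
    rw [Nat.add_zero] at hte
    rw [← hte] at hc
    rw [Finset.Icc_self, Finset.sum_singleton, Nat.sub_self, pow_zero, one_mul] at hc
    obtain ⟨M₀, hM₀, hcM₀, z, hcard0, hsum0⟩ := extract p a hp ha hn t (le_of_eq hte) M hM hc
    refine ⟨(M₀.map Prod.fst).sum, msum_mono (Multiset.map_le_map hM₀), ?_, z, ?_⟩
    · rw [hcard0, hte]
    · rw [hsum0, hte]
  | succ d ih =>
    intro t hte M hM hc
    have ht1 : t + 1 ≤ a ⟨0, hn⟩ := by omega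
    have hsplit : ∑ k ∈ Finset.Icc (t + 1) (a ⟨0, hn⟩),
        p ^ (k - (t + 1)) * EGZ (Fin ((Finset.univ.filter fun i => k ≤ a i).card) → ZMod p) =
        EGZ (Fin ((Finset.univ.filter fun i => (t + 1) ≤ a i).card) → ZMod p) +
        p * ∑ k ∈ Finset.Icc (t + 2) (a ⟨0, hn⟩),
          p ^ (k - (t + 2)) * EGZ (Fin ((Finset.univ.filter fun i => k ≤ a i).card) → ZMod p) := by
      rw [Finset.Icc_eq_cons_Ioc ht1, Finset.sum_cons, Nat.sub_self, pow_zero, one_mul,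
        ← Finset.Icc_add_one_left_eq_Ioc, Finset.mul_sum]
      congr 1
      apply Finset.sum_congr rfl
      intro k hk
      have hk2 : t + 2 ≤ k := (Finset.mem_Icc.mp hk).1
      rw [← mul_assoc]
      congr 1
      rw [← pow_succ']
      congr 1
      omega
    obtain ⟨M', hcM', hblk', hle'⟩ := harvest p a hp ha hn t ht1
      (∑ k ∈ Finset.Icc (t + 2) (a ⟨0, hn⟩),
        p ^ (k - (t + 2)) * EGZ (Fin ((Finset.univ.filter fun i => k ≤ a i).card) → ZMod p))
      M hM (hc.trans hsplit)
    obtain ⟨T, hT, h1, h2⟩ := ih (t + 1) (by omega) M' hblk' hcM'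
    exact ⟨T, le_trans hT hle', h1, h2⟩

end

section
variable {n : ℕ} (p : ℕ) (a : Fin n → ℕ)

lemma exp_G (hp : p.Prime) (ha : ∀ i, 0 < a i) (hn : 0 < n) (hmono : Antitone a) :
    AddMonoid.exponent (∀ i, ZMod (p ^ a i)) = p ^ a ⟨0, hn⟩ := by
  apply Nat.dvd_antisymm
  · apply AddMonoid.exponent_dvd_of_forall_nsmul_eq_zero
    intro f
    funext i
    have hle : a i ≤ a ⟨0, hn⟩ := hmono (by simp [Fin.le_def])
    simpa using pow_smul_zmod_zero hle (f i)
  · have h := AddMonoidHom.exponent_dvd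
      (f := Pi.evalAddMonoidHom (fun i : Fin n => ZMod (p ^ a i)) ⟨0, hn⟩)
      (Function.surjective_eval _)
    rwa [ZMod.exponent] at h

/-- **Remark.** Let p be a prime and G = (ℤ/p^{a_1}ℤ) × ... × (ℤ/p^{a_n}ℤ) where
a_1 ≥ a_2 ≥ ... ≥ a_n are positive integers. For j = 1, ..., a_1 let b_j be the number of
indices i with a_i ≥ j (which, since a is sorted decreasingly, is the largest index i with
a_i ≥ j). Then 𝔰(G) ≤ ∑_{j=1}^{a_1} p^{j-1}·𝔰(F_p^{b_j}). -/
theorem stmt10 (p : ℕ) (hp : p.Prime) (n : ℕ) (hn : 0 < n) (a : Fin n → ℕ)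
    (ha : ∀ i, 0 < a i) (hmono : Antitone a) :
    EGZ (∀ i, ZMod (p ^ a i)) ≤
      ∑ j ∈ Finset.Icc 1 (a ⟨0, hn⟩),
        p ^ (j - 1) * EGZ (Fin ((Finset.univ.filter fun i => j ≤ a i).card) → ZMod p) := by
  classical
  haveI : NeZero p := ⟨hp.pos.ne'⟩
  have he : 1 ≤ a ⟨0, hn⟩ := ha _
  apply Nat.sInf_le
  constructor
  · -- positivity of the sum
    have h1 : (1 : ℕ) ∈ Finset.Icc 1 (a ⟨0, hn⟩) := Finset.mem_Icc.mpr ⟨le_refl _, he⟩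
    have hpos : 0 < p ^ (1 - 1) *
        EGZ (Fin ((Finset.univ.filter fun i => 1 ≤ a i).card) → ZMod p) := by
      have := (egz_spec (Fin ((Finset.univ.filter fun i => 1 ≤ a i).card) → ZMod p)).1
      simpa using this
    calc 0 < p ^ (1 - 1) *
        EGZ (Fin ((Finset.univ.filter fun i => 1 ≤ a i).card) → ZMod p) := hpos
      _ ≤ _ := Finset.single_le_sum
        (f := fun j => p ^ (j - 1) *
          EGZ (Fin ((Finset.univ.filter fun i => j ≤ a i).card) → ZMod p))
        (fun k _ => Nat.zero_le _) h1
  · intro m hm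
    set M : Multiset (Multiset (∀ i, ZMod (p ^ a i)) × (∀ i, ZMod (p ^ a i))) :=
      m.map (fun x => (({x} : Multiset _), x)) with hMdef
    have hblk : ∀ q ∈ M, Multiset.card q.1 = p ^ 0 ∧ q.1.sum = p ^ 0 • q.2 := by
      intro q hq
      obtain ⟨x, _, rfl⟩ := Multiset.mem_map.mp hq
      simp
    have hcM : Multiset.card M = ∑ k ∈ Finset.Icc (0 + 1) (a ⟨0, hn⟩),
        p ^ (k - (0 + 1)) * EGZ (Fin ((Finset.univ.filter fun i => k ≤ a i).card) → ZMod p) := by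
      rw [hMdef, Multiset.card_map, hm]
    obtain ⟨T, hT, hcT, z, hzT⟩ := engine p a hp ha hn (a ⟨0, hn⟩ - 1) 0 (by omega) M hblk hcM
    have hjoin : (M.map Prod.fst).sum = m := by
      rw [hMdef, Multiset.map_map]
      exact Multiset.sum_map_singleton m
    refine ⟨T, by rwa [hjoin] at hT, ?_, ?_⟩
    · rw [hcT, exp_G p a hp ha hn hmono]
    · rw [hzT]
      funext i
      have hle : a i ≤ a ⟨0, hn⟩ := hmono (by simp [Fin.le_def])
      simpa using pow_smul_zmod_zero hle (z i)

end
end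

section
/- Let G be a non-trivial finite abelian group, let p_1, ..., p_m be the distinct prime factors of exp(G), and write G ≅ G_1 × ... × G_m where each G_i is a non-trivial p_i-group. Then 𝔰(G) ≤ Σ_{i=1}^{m} exp(G_1)⋯exp(G_{i-1})·𝔰(G_i) ≤ exp(G)·(𝔰(G_1)/exp(G_1) + ... + 𝔰(G_m)/exp(G_m)). -/
namespace EGZAux

lemma exists_le_card {α : Type*} {m : Multiset α} {n : ℕ} (h : n ≤ Multiset.card m) :
    ∃ t ≤ m, Multiset.card t = n := by
  induction n with
  | zero => exact ⟨0, Multiset.zero_le m, rfl⟩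
  | succ k ih =>
    classical
    obtain ⟨t, ht, hc⟩ := ih (by omega)
    have hlt : 0 < Multiset.card (m - t) := by
      rw [Multiset.card_sub ht]; omega
    obtain ⟨a, ha⟩ := Multiset.card_pos_iff_exists_mem.1 hlt
    refine ⟨a ::ₘ t, ?_, by simp [hc]⟩
    calc a ::ₘ t = {a} + t := (Multiset.singleton_add a t).symm
      _ ≤ (m - t) + t := add_le_add_left (Multiset.singleton_le.2 ha) t
      _ = m := tsub_add_cancel_of_le ht

lemma lift_le_map {α β : Type*} (f : α → β) :
    ∀ (t : Multiset β) (m : Multiset α), t ≤ m.map f → ∃ s ≤ m, s.map f = t := by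
  intro t
  induction t using Multiset.induction with
  | empty => exact fun m _ => ⟨0, Multiset.zero_le m, rfl⟩
  | cons a t ih =>
    intro m h
    classical
    have ha : a ∈ m.map f := Multiset.mem_of_le h (Multiset.mem_cons_self a t)
    obtain ⟨b, hb, rfl⟩ := Multiset.mem_map.1 ha
    have hm : m.map f = f b ::ₘ (m.erase b).map f := by
      conv_lhs => rw [← Multiset.cons_erase hb]
      rw [Multiset.map_cons]
    rw [hm, Multiset.cons_le_cons_iff] at h
    obtain ⟨s, hs, rfl⟩ := ih (m.erase b) h
    refine ⟨b ::ₘ s, ?_, by rw [Multiset.map_cons]⟩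
    calc b ::ₘ s ≤ b ::ₘ m.erase b := Multiset.cons_le_cons b hs
      _ = m := Multiset.cons_erase hb

lemma sum_mono_multiset {α : Type*} {S T : Multiset (Multiset α)} (h : S ≤ T) :
    S.sum ≤ T.sum := by
  obtain ⟨d, rfl⟩ := Multiset.le_iff_exists_add.1 h
  rw [Multiset.sum_add]
  exact le_add_of_nonneg_right (Multiset.zero_le _)

lemma card_multiset_sum {α : Type*} (S : Multiset (Multiset α)) :
    Multiset.card S.sum = (S.map Multiset.card).sum := by
  induction S using Multiset.induction with
  | empty => simp
  | cons a S ih => simp [ih]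

lemma sum_multiset_sum {α : Type*} [AddCommMonoid α] (S : Multiset (Multiset α)) :
    S.sum.sum = (S.map Multiset.sum).sum := by
  induction S using Multiset.induction with
  | empty => simp
  | cons a S ih => simp [ih]

/-- The defining property of a candidate value for the EGZ constant. -/
def Good (G : Type*) [AddCommGroup G] (e s : ℕ) : Prop :=
  0 < s ∧ ∀ M : Multiset G, s ≤ Multiset.card M →
    ∃ t ≤ M, Multiset.card t = e ∧ t.sum = 0

lemma good_congr {G H : Type*} [AddCommGroup G] [AddCommGroup H] (e' : G ≃+ H) {n s : ℕ}
    (h : Good G n s) : Good H n s := by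
  refine ⟨h.1, fun M hM => ?_⟩
  obtain ⟨t, ht, hc, hs⟩ := h.2 (M.map e'.symm) (by rwa [Multiset.card_map])
  refine ⟨t.map e', ?_, by rw [Multiset.card_map, hc], ?_⟩
  · have h2 := Multiset.map_le_map (f := (e' : G → H)) ht
    rw [Multiset.map_map] at h2
    simpa using h2
  · rw [show (t.map e').sum = e' t.sum from (map_multiset_sum (e' : G →+ H) t).symm, hs,
      map_zero]


lemma extract {A G : Type*} [AddCommGroup A] [AddCommGroup G] (φ : G →+ A) {eA sA : ℕ}
    (hA : Good A eA sA) :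
    ∀ (k : ℕ) (M : Multiset G), sA + eA * k ≤ Multiset.card M →
      ∃ T : Multiset (Multiset G), Multiset.card T = k ∧ T.sum ≤ M ∧
        ∀ t ∈ T, Multiset.card t = eA ∧ (t.map φ).sum = 0 := by
  intro k
  induction k with
  | zero =>
    intro M _
    exact ⟨0, rfl, Multiset.zero_le M, by simp⟩
  | succ k ih =>
    intro M hM
    classical
    have h1 : sA ≤ Multiset.card (M.map φ) := by rw [Multiset.card_map]; omega
    obtain ⟨t', ht', hct', hs'⟩ := hA.2 (M.map φ) h1
    obtain ⟨t, htM, rfl⟩ := lift_le_map φ t' M ht'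
    have hct : Multiset.card t = eA := by rwa [Multiset.card_map] at hct'
    have hsub : sA + eA * k ≤ Multiset.card (M - t) := by
      rw [Multiset.card_sub htM, hct]
      have h2 := Multiset.card_le_card htM
      rw [hct] at h2
      have h3 : eA * (k + 1) = eA * k + eA := by ring
      omega
    obtain ⟨T, hcT, hTle, hTprop⟩ := ih (M - t) hsub
    refine ⟨t ::ₘ T, by simp [hcT], ?_, ?_⟩
    · rw [Multiset.sum_cons]
      calc t + T.sum ≤ t + (M - t) := add_le_add_right hTle t
        _ = M := by rw [add_comm, tsub_add_cancel_of_le htM]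
    · intro u hu
      rcases Multiset.mem_cons.1 hu with h | h
      · subst h; exact ⟨hct, hs'⟩
      · exact hTprop u h

lemma good_of_homs {G A B : Type*} [AddCommGroup G] [AddCommGroup A] [AddCommGroup B]
    (φ : G →+ A) (ψ : G →+ B) (hinj : ∀ x : G, φ x = 0 → ψ x = 0 → x = 0)
    {eA sA eB sB : ℕ} (hA : Good A eA sA) (hB : Good B eB sB) :
    Good G (eA * eB) (sA + eA * sB) := by
  refine ⟨by have := hA.1; omega, ?_⟩
  intro M hM
  obtain ⟨T, hcT, hTle, hTprop⟩ := extract φ hA sB M hM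
  have hcard : sB ≤ Multiset.card (T.map fun t => ψ t.sum) := by
    rw [Multiset.card_map, hcT]
  obtain ⟨u, hu, hcu, hsu⟩ := hB.2 _ hcard
  obtain ⟨S, hST, hmap⟩ := lift_le_map (fun t => ψ t.sum) u T hu
  have hScard : Multiset.card S = eB := by
    rw [← hcu, ← hmap, Multiset.card_map]
  have hmem : ∀ t ∈ S, Multiset.card t = eA ∧ (t.map φ).sum = 0 :=
    fun t ht => hTprop t (Multiset.mem_of_le hST ht)
  refine ⟨S.sum, le_trans (sum_mono_multiset hST) hTle, ?_, ?_⟩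
  · rw [card_multiset_sum]
    have : S.map Multiset.card = Multiset.replicate eB eA := by
      rw [Multiset.eq_replicate]
      constructor
      · rw [Multiset.card_map, hScard]
      · intro b hb
        obtain ⟨t, ht, rfl⟩ := Multiset.mem_map.1 hb
        exact (hmem t ht).1
    rw [this, Multiset.sum_replicate, smul_eq_mul, mul_comm]
  · apply hinj
    · rw [sum_multiset_sum, map_multiset_sum, Multiset.map_map]
      apply Multiset.sum_eq_zero
      intro x hx
      obtain ⟨t, ht, rfl⟩ := Multiset.mem_map.1 hx
      show φ t.sum = 0
      rw [map_multiset_sum]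
      exact (hmem t ht).2
    · rw [sum_multiset_sum, map_multiset_sum, Multiset.map_map]
      rw [show (⇑ψ ∘ Multiset.sum) = (fun t : Multiset G => ψ t.sum) from rfl, hmap, hsu]


lemma prod_Iio_succ {M : Type*} [CommMonoid M] {m : ℕ} (f : Fin (m + 2) → M) (i : Fin (m + 1)) :
    ∏ j ∈ Finset.Iio i.succ, f j = f 0 * ∏ j ∈ Finset.Iio i, f j.succ := by
  have hset : Finset.Iio i.succ =
      insert (0 : Fin (m + 2)) ((Finset.Iio i).map ⟨Fin.succ, Fin.succ_injective _⟩) := by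
    ext j
    simp only [Finset.mem_Iio, Finset.mem_insert, Finset.mem_map,
      Function.Embedding.coeFn_mk]
    constructor
    · intro hj
      rcases Fin.eq_zero_or_eq_succ j with h | ⟨k, rfl⟩
      · exact Or.inl h
      · exact Or.inr ⟨k, by rwa [Fin.succ_lt_succ_iff] at hj, rfl⟩
    · rintro (rfl | ⟨k, hk, rfl⟩)
      · exact Fin.succ_pos i
      · exact Fin.succ_lt_succ_iff.2 hk
  rw [hset, Finset.prod_insert, Finset.prod_map]
  · rfl
  · simp [Fin.succ_ne_zero]

universe u

lemma good_pi : ∀ (m : ℕ) (Gi : Fin (m + 1) → Type u) (_ : ∀ i, AddCommGroup (Gi i))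
    (ee ss : Fin (m + 1) → ℕ), (∀ i, Good (Gi i) (ee i) (ss i)) →
    Good (∀ i, Gi i) (∏ i, ee i) (∑ i, (∏ j ∈ Finset.Iio i, ee j) * ss i) := by
  intro m
  induction m with
  | zero =>
    intro Gi inst ee ss h
    have huniv : (Finset.univ : Finset (Fin (0 + 1))) = {0} := by
      ext j
      simp [Fin.eq_zero j]
    have hIio : Finset.Iio (0 : Fin (0 + 1)) = ∅ := by
      ext j
      simp
    have e1 : (∏ i, ee i) = ee 0 := by rw [huniv, Finset.prod_singleton]
    have e2 : (∑ i, (∏ j ∈ Finset.Iio i, ee j) * ss i) = ss 0 := by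
      rw [huniv, Finset.sum_singleton, hIio, Finset.prod_empty, one_mul]
    rw [e1, e2]
    letI : Unique (Fin (0 + 1)) := ⟨⟨0⟩, fun a => Fin.eq_zero a⟩
    exact good_congr (AddEquiv.piUnique Gi).symm (h 0)
  | succ m ih =>
    intro Gi inst ee ss h
    let φ : (∀ i, Gi i) →+ Gi 0 := Pi.evalAddMonoidHom Gi 0
    let ψ : (∀ i, Gi i) →+ (∀ i : Fin (m + 1), Gi i.succ) :=
      { toFun := fun g i => g i.succ, map_zero' := rfl, map_add' := fun _ _ => rfl }
    have hinj : ∀ x : ∀ i, Gi i, φ x = 0 → ψ x = 0 → x = 0 := by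
      intro x h0 hs
      funext j
      rcases Fin.eq_zero_or_eq_succ j with rfl | ⟨k, rfl⟩
      · exact h0
      · exact congrFun hs k
    have hB := ih (fun i => Gi i.succ) (fun i => inferInstance) (fun i => ee i.succ)
      (fun i => ss i.succ) (fun i => h i.succ)
    have hG := good_of_homs φ ψ hinj (h 0) hB
    beta_reduce at hG
    have hIio : Finset.Iio (0 : Fin (m + 2)) = ∅ := by
      ext j
      simp
    have e1 : ee 0 * (∏ i : Fin (m + 1), ee i.succ) = ∏ i, ee i :=
      (Fin.prod_univ_succ ee).symm
    have e2 : (∑ i : Fin (m + 2), (∏ j ∈ Finset.Iio i, ee j) * ss i)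
        = ss 0 + ee 0 * (∑ i : Fin (m + 1), (∏ j ∈ Finset.Iio i, ee j.succ) * ss i.succ) := by
      rw [Fin.sum_univ_succ (fun i : Fin (m + 2) => (∏ j ∈ Finset.Iio i, ee j) * ss i)]
      rw [hIio, Finset.prod_empty, one_mul, Finset.mul_sum]
      congr 1
      apply Finset.sum_congr rfl
      intro i _
      rw [prod_Iio_succ ee i, mul_assoc]
    rw [e1] at hG
    rw [e2]
    exact hG


/-- The defining set for `EGZ G` is nonempty for a finite group. -/
lemma egz_set_nonempty (G : Type*) [AddCommGroup G] [Fintype G] :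
    {s | 0 < s ∧ ∀ m : Multiset G, Multiset.card m = s →
      ∃ t ≤ m, Multiset.card t = AddMonoid.exponent G ∧ t.sum = 0}.Nonempty := by
  classical
  have hdvd : AddMonoid.exponent G ∣ Fintype.card G := AddGroup.exponent_dvd_card
  have hcard : 0 < Fintype.card G := Fintype.card_pos
  have he : 0 < AddMonoid.exponent G := by
    rcases Nat.eq_zero_or_pos (AddMonoid.exponent G) with h | h
    · rw [h] at hdvd
      omega
    · exact h
  refine ⟨Fintype.card G * AddMonoid.exponent G, by positivity, ?_⟩
  intro M hM
  have hex : ∃ a : G, AddMonoid.exponent G ≤ M.count a := by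
    by_contra hcon
    push_neg at hcon
    have h1 : Multiset.card M = ∑ a ∈ M.toFinset, M.count a :=
      (Multiset.toFinset_sum_count_eq M).symm
    have h2 : ∑ a ∈ M.toFinset, M.count a ≤
        ∑ _a ∈ M.toFinset, (AddMonoid.exponent G - 1) :=
      Finset.sum_le_sum fun a _ => by have := hcon a; omega
    have h3 : ∑ _a ∈ M.toFinset, (AddMonoid.exponent G - 1)
        = M.toFinset.card * (AddMonoid.exponent G - 1) := by
      rw [Finset.sum_const, smul_eq_mul]
    have h4 : M.toFinset.card ≤ Fintype.card G := Finset.card_le_univ _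
    have h5 : M.toFinset.card * (AddMonoid.exponent G - 1) ≤
        Fintype.card G * (AddMonoid.exponent G - 1) := Nat.mul_le_mul_right _ h4
    have h6 : Fintype.card G * (AddMonoid.exponent G - 1) <
        Fintype.card G * AddMonoid.exponent G :=
      (Nat.mul_lt_mul_left hcard).2 (by omega)
    omega
  obtain ⟨a, ha⟩ := hex
  refine ⟨Multiset.replicate (AddMonoid.exponent G) a,
    Multiset.le_count_iff_replicate_le.1 ha, Multiset.card_replicate _ _, ?_⟩
  rw [Multiset.sum_replicate]
  exact AddMonoid.exponent_nsmul_eq_zero a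

lemma good_of_egz (G : Type*) [AddCommGroup G] [Fintype G] :
    Good G (AddMonoid.exponent G) (EGZ G) := by
  have hmem := Nat.sInf_mem (egz_set_nonempty G)
  refine ⟨hmem.1, fun M hM => ?_⟩
  obtain ⟨M₀, hM₀, hc₀⟩ := exists_le_card hM
  obtain ⟨t, ht, hct, hst⟩ := hmem.2 M₀ hc₀
  exact ⟨t, le_trans ht hM₀, hct, hst⟩

lemma egz_le_of_good {G : Type*} [AddCommGroup G] {N : ℕ}
    (h : Good G (AddMonoid.exponent G) N) : EGZ G ≤ N :=
  Nat.sInf_le ⟨h.1, fun M hM => h.2 M (le_of_eq hM.symm)⟩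

lemma nat_prod_dvd {ι : Type*} (s : Finset ι) (f : ι → ℕ) (n : ℕ)
    (hcop : ∀ i ∈ s, ∀ j ∈ s, i ≠ j → Nat.Coprime (f i) (f j))
    (hdvd : ∀ i ∈ s, f i ∣ n) : (∏ i ∈ s, f i) ∣ n := by
  classical
  induction s using Finset.induction_on with
  | empty => simpa using one_dvd n
  | insert a t ha ih =>
    rw [Finset.prod_insert ha]
    have hcop' : Nat.Coprime (f a) (∏ i ∈ t, f i) :=
      Nat.Coprime.prod_right fun i hi =>
        hcop a (Finset.mem_insert_self a t) i (Finset.mem_insert_of_mem hi)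
          (fun h => ha (h ▸ hi))
    exact hcop'.mul_dvd_of_dvd_of_dvd (hdvd a (Finset.mem_insert_self a t))
      (ih (fun i hi j hj hij => hcop i (Finset.mem_insert_of_mem hi) j
        (Finset.mem_insert_of_mem hj) hij)
        (fun i hi => hdvd i (Finset.mem_insert_of_mem hi)))


lemma exponent_pi {m : ℕ} (Gi : Fin m → Type u) [inst : ∀ i, AddCommGroup (Gi i)]
    [∀ i, Finite (Gi i)]
    (hcop : ∀ i j, i ≠ j →
      Nat.Coprime (AddMonoid.exponent (Gi i)) (AddMonoid.exponent (Gi j))) :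
    AddMonoid.exponent (∀ i, Gi i) = ∏ i, AddMonoid.exponent (Gi i) := by
  apply Nat.dvd_antisymm
  · rw [AddMonoid.exponent_dvd_iff_forall_nsmul_eq_zero]
    intro g
    funext i
    have hdvd : AddMonoid.exponent (Gi i) ∣ ∏ j, AddMonoid.exponent (Gi j) :=
      Finset.dvd_prod_of_mem _ (Finset.mem_univ i)
    obtain ⟨c, hc⟩ := hdvd
    have : ((∏ j, AddMonoid.exponent (Gi j)) • g) i
        = (∏ j, AddMonoid.exponent (Gi j)) • (g i) := rfl
    rw [this, hc, mul_comm, mul_smul, AddMonoid.exponent_nsmul_eq_zero, smul_zero]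
    rfl
  · apply nat_prod_dvd _ _ _ (fun i _ j _ hij => hcop i j hij)
    intro i _
    exact AddMonoid.exponent_dvd_of_addMonoidHom (AddMonoidHom.single Gi i)
      (Pi.single_injective (M := Gi) i)

end EGZAux

/-- **Lemma.** Let G be a non-trivial finite abelian group, let p_1, ..., p_m be the distinct
prime factors of exp(G), and write G ≅ G_1 × ... × G_m where each G_i is a non-trivial
p_i-group. Then
𝔰(G) ≤ ∑_{i=1}^m exp(G_1)⋯exp(G_{i-1})·𝔰(G_i) ≤ exp(G)·∑_{i=1}^m 𝔰(G_i)/exp(G_i). -/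
theorem stmt11 (G : Type*) [AddCommGroup G] [Fintype G] [Nontrivial G]
    (m : ℕ) (p : Fin m → ℕ) (hp : ∀ i, (p i).Prime) (hinj : Function.Injective p)
    (hfac : ∀ q, q ∈ (AddMonoid.exponent G).primeFactors ↔ ∃ i, p i = q)
    (Gi : Fin m → Type*) [∀ i, AddCommGroup (Gi i)] [∀ i, Fintype (Gi i)]
    [∀ i, Nontrivial (Gi i)]
    (hpgroup : ∀ i, ∃ k : ℕ, Fintype.card (Gi i) = p i ^ k)
    (e : G ≃+ ∀ i, Gi i) :
    EGZ G ≤ ∑ i : Fin m,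
        (∏ j ∈ Finset.Iio i, AddMonoid.exponent (Gi j)) * EGZ (Gi i) ∧
    ((∑ i : Fin m,
        (∏ j ∈ Finset.Iio i, AddMonoid.exponent (Gi j)) * EGZ (Gi i) : ℕ) : ℝ) ≤
      (AddMonoid.exponent G : ℝ) *
        ∑ i : Fin m, (EGZ (Gi i) : ℝ) / (AddMonoid.exponent (Gi i) : ℝ) := by
  classical
  open EGZAux in
  -- basic facts
  have hepos : ∀ i, 0 < AddMonoid.exponent (Gi i) := fun i =>
    Nat.pos_of_ne_zero AddMonoid.exponent_ne_zero_of_finite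
  have hcop : ∀ i j, i ≠ j →
      Nat.Coprime (AddMonoid.exponent (Gi i)) (AddMonoid.exponent (Gi j)) := by
    intro i j hij
    obtain ⟨ki, hki⟩ := hpgroup i
    obtain ⟨kj, hkj⟩ := hpgroup j
    have hdi : AddMonoid.exponent (Gi i) ∣ p i ^ ki := by
      rw [← hki]; exact AddGroup.exponent_dvd_card
    have hdj : AddMonoid.exponent (Gi j) ∣ p j ^ kj := by
      rw [← hkj]; exact AddGroup.exponent_dvd_card
    have hpq : Nat.Coprime (p i ^ ki) (p j ^ kj) :=
      ((Nat.coprime_primes (hp i) (hp j)).2 (fun h => hij (hinj h))).pow ki kj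
    exact Nat.Coprime.coprime_dvd_left hdi (Nat.Coprime.coprime_dvd_right hdj hpq)
  have hexpG : AddMonoid.exponent G = AddMonoid.exponent (∀ i, Gi i) :=
    AddMonoid.exponent_eq_of_addEquiv e
  have hprod : AddMonoid.exponent (∀ i, Gi i) = ∏ i, AddMonoid.exponent (Gi i) :=
    EGZAux.exponent_pi Gi hcop
  -- m ≠ 0
  have hm0 : m ≠ 0 := by
    have h1 : 1 < AddMonoid.exponent G := AddMonoid.one_lt_exponent
    obtain ⟨q, hq⟩ := Nat.nonempty_primeFactors.2 h1
    obtain ⟨i, _⟩ := (hfac q).1 hq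
    intro h
    subst h
    exact i.elim0
  -- first inequality
  have hfirst : EGZ G ≤ ∑ i : Fin m,
      (∏ j ∈ Finset.Iio i, AddMonoid.exponent (Gi j)) * EGZ (Gi i) := by
    obtain ⟨m', rfl⟩ := Nat.exists_eq_succ_of_ne_zero hm0
    have hgood := EGZAux.good_pi m' Gi inferInstance
      (fun i => AddMonoid.exponent (Gi i)) (fun i => EGZ (Gi i))
      (fun i => EGZAux.good_of_egz (Gi i))
    have hgoodG := EGZAux.good_congr e.symm hgood
    rw [← hprod, ← hexpG] at hgoodG
    exact EGZAux.egz_le_of_good hgoodG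
  refine ⟨hfirst, ?_⟩
  -- second inequality
  have hnat : (∑ i : Fin m,
        (∏ j ∈ Finset.Iio i, AddMonoid.exponent (Gi j)) * EGZ (Gi i))
      ≤ ∑ i : Fin m,
        (∏ j ∈ Finset.univ.erase i, AddMonoid.exponent (Gi j)) * EGZ (Gi i) := by
    apply Finset.sum_le_sum
    intro i _
    apply Nat.mul_le_mul_right
    apply Finset.prod_le_prod_of_subset_of_one_le'
    · intro j hj
      exact Finset.mem_erase.2 ⟨ne_of_lt (Finset.mem_Iio.1 hj), Finset.mem_univ j⟩
    · intro j _ _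
      exact hepos j
  have hcast : ((∑ i : Fin m,
        (∏ j ∈ Finset.univ.erase i, AddMonoid.exponent (Gi j)) * EGZ (Gi i) : ℕ) : ℝ)
      = (AddMonoid.exponent G : ℝ) *
        ∑ i : Fin m, (EGZ (Gi i) : ℝ) / (AddMonoid.exponent (Gi i) : ℝ) := by
    rw [hexpG, hprod]
    push_cast
    rw [Finset.mul_sum]
    apply Finset.sum_congr rfl
    intro i _
    have hne : ((AddMonoid.exponent (Gi i) : ℕ) : ℝ) ≠ 0 :=
      Nat.cast_ne_zero.2 (hepos i).ne'
    have hsplit : (∏ j, (AddMonoid.exponent (Gi j) : ℝ))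
        = (AddMonoid.exponent (Gi i) : ℝ) *
          ∏ j ∈ Finset.univ.erase i, (AddMonoid.exponent (Gi j) : ℝ) :=
      (Finset.mul_prod_erase Finset.univ _ (Finset.mem_univ i)).symm
    rw [hsplit]
    field_simp
  calc ((∑ i : Fin m,
        (∏ j ∈ Finset.Iio i, AddMonoid.exponent (Gi j)) * EGZ (Gi i) : ℕ) : ℝ)
      ≤ ((∑ i : Fin m,
        (∏ j ∈ Finset.univ.erase i, AddMonoid.exponent (Gi j)) * EGZ (Gi i) : ℕ) : ℝ) := by
        exact_mod_cast hnat
    _ = _ := hcast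
end

section
/- For every non-trivial finite abelian group G, 𝔰(G) ≤ (exp(G) - 1)·(𝔤(G) - 1) + 1. -/
/-- For every non-trivial finite abelian group G, 𝔰(G) ≤ (exp(G) - 1)·(𝔤(G) - 1) + 1. -/
theorem stmt14 (G : Type*) [AddCommGroup G] [Fintype G] [Nontrivial G] :
    EGZ G ≤ (AddMonoid.exponent G - 1) * (gEGZ G - 1) + 1 := by
  classical
  set e := AddMonoid.exponent G with he
  have he1 : 1 < e := AddMonoid.one_lt_exponent
  apply Nat.sInf_le
  refine ⟨Nat.succ_pos _, ?_⟩
  intro m hm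
  by_cases hcase : ∃ a : G, e ≤ m.count a
  · obtain ⟨a, ha⟩ := hcase
    refine ⟨Multiset.replicate e a, ?_, by simp [he], ?_⟩
    · rw [Multiset.le_iff_count]
      intro b
      rw [Multiset.count_replicate]
      split
      · next h => subst h; exact ha
      · exact Nat.zero_le _
    · rw [Multiset.sum_replicate]
      exact AddMonoid.exponent_nsmul_eq_zero a
  · push_neg at hcase
    have hg : gEGZ G ≤ m.toFinset.card := by
      by_contra h
      push_neg at h
      have h1 : Multiset.card m ≤ (e - 1) * m.toFinset.card := by
        calc Multiset.card m = ∑ a ∈ m.toFinset, m.count a :=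
              (Multiset.toFinset_sum_count_eq m).symm
          _ ≤ ∑ _a ∈ m.toFinset, (e - 1) :=
              Finset.sum_le_sum (fun a _ => by have := hcase a; omega)
          _ = (e - 1) * m.toFinset.card := by
              rw [Finset.sum_const, smul_eq_mul, mul_comm]
      have h2 : (e - 1) * m.toFinset.card ≤ (e - 1) * (gEGZ G - 1) :=
        Nat.mul_le_mul_left _ (by omega)
      have h3 : (e - 1) * (gEGZ G - 1) < Multiset.card m := by
        rw [hm]; exact Nat.lt_succ_self _
      omega
    have hne : {a : ℕ | ∀ A : Finset G, a ≤ A.card →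
        ∃ B ⊆ A, B.card = AddMonoid.exponent G ∧ ∑ x ∈ B, x = 0}.Nonempty := by
      refine ⟨Fintype.card G + 1, fun A hA => absurd hA ?_⟩
      have := Finset.card_le_univ A
      omega
    have hmem := Nat.sInf_mem hne
    obtain ⟨B, hBsub, hBcard, hBsum⟩ := hmem m.toFinset hg
    refine ⟨B.val, ?_, hBcard, by simpa using hBsum⟩
    rw [Multiset.le_iff_count]
    intro b
    by_cases hb : b ∈ B
    · have hbm : b ∈ m.toFinset := hBsub hb
      rw [Multiset.count_eq_one_of_mem B.nodup hb]
      exact Multiset.one_le_count_iff_mem.mpr (Multiset.mem_toFinset.mp hbm)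
    · rw [Multiset.count_eq_zero_of_notMem hb]
      exact Nat.zero_le _
end
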